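/- arXiv:2306.08340 — 8 statements merged into one kernel-verified Lean document; each statement's English description precedes it below -/
import Mathlib

section
/- For every constant C > 0 and every randomized algorithm for the classical secretary problem with predictions in the random-order model, there exists an instance (n, v, v̂) with v strictly positive such that the algorithm's expected hired value on that instance is less than max{1 − Cε, 0.348} · max_{i∈N} v(i), where ε = max_{i∈N} |1 − v̂(i)/v(i)|. -/
/-- The expected value hired by the randomized algorithm `A` (which maps the sequence of
(identity, actual value) pairs revealed so far to the probability of hiring the last-revealed
candidate, decisions being drawn independently given the history and conditional on nobody
having been hired yet) on values `v` when the candidates are revealed in the order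
`σ 0, σ 1, …`: the probability of hiring the candidate at position `k` is the product of the
hiring probability at step `k` and of the non-hiring probabilities at all earlier steps. -/
noncomputable def randHiredValue (n : ℕ) (A : List (Fin n × ℝ) → ℝ)
    (v : Fin n → ℝ) (σ : Equiv.Perm (Fin n)) : ℝ :=
  ∑ k : Fin n,
    v (σ k) * A (((List.finRange n).take (k.1 + 1)).map fun j => (σ j, v (σ j))) *
      ∏ j ∈ Finset.univ.filter (fun j : Fin n => j < k),
        (1 - A (((List.finRange n).take (j.1 + 1)).map fun l => (σ l, v (σ l))))

namespace RHaux

def vxy (x y : ℝ) : Fin 3 → ℝ := fun i => if i = 0 then 2 else if i = 1 then x else y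

@[simp] lemma vxy0 (x y : ℝ) : vxy x y 0 = 2 := rfl
@[simp] lemma vxy1 (x y : ℝ) : vxy x y 1 = x := rfl
@[simp] lemma vxy2 (x y : ℝ) : vxy x y 2 = y := rfl

lemma vxy_pos {x y : ℝ} (hx : 0 < x) (hy : 0 < y) : ∀ i, 0 < vxy x y i := by
  intro i; fin_cases i <;> simp [vxy] <;> assumption

def s021 : Equiv.Perm (Fin 3) := ⟨![0,2,1], ![0,2,1], by decide, by decide⟩
def s102 : Equiv.Perm (Fin 3) := ⟨![1,0,2], ![1,0,2], by decide, by decide⟩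
def s120 : Equiv.Perm (Fin 3) := ⟨![1,2,0], ![2,0,1], by decide, by decide⟩
def s201 : Equiv.Perm (Fin 3) := ⟨![2,0,1], ![1,2,0], by decide, by decide⟩
def s210 : Equiv.Perm (Fin 3) := ⟨![2,1,0], ![2,1,0], by decide, by decide⟩

@[simp] lemma s021_0 : s021 0 = 0 := rfl
@[simp] lemma s021_1 : s021 1 = 2 := rfl
@[simp] lemma s021_2 : s021 2 = 1 := rfl
@[simp] lemma s102_0 : s102 0 = 1 := rfl
@[simp] lemma s102_1 : s102 1 = 0 := rfl
@[simp] lemma s102_2 : s102 2 = 2 := rfl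
@[simp] lemma s120_0 : s120 0 = 1 := rfl
@[simp] lemma s120_1 : s120 1 = 2 := rfl
@[simp] lemma s120_2 : s120 2 = 0 := rfl
@[simp] lemma s201_0 : s201 0 = 2 := rfl
@[simp] lemma s201_1 : s201 1 = 0 := rfl
@[simp] lemma s201_2 : s201 2 = 1 := rfl
@[simp] lemma s210_0 : s210 0 = 2 := rfl
@[simp] lemma s210_1 : s210 1 = 1 := rfl
@[simp] lemma s210_2 : s210 2 = 0 := rfl

lemma sum_perm3 (f : Equiv.Perm (Fin 3) → ℝ) :
    ∑ σ : Equiv.Perm (Fin 3), f σ =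
      f (Equiv.refl _) + f s021 + f s102 + f s120 + f s201 + f s210 := by
  have h : (Finset.univ : Finset (Equiv.Perm (Fin 3)))
      = {Equiv.refl _, s021, s102, s120, s201, s210} := by decide
  rw [h, Finset.sum_insert (by decide), Finset.sum_insert (by decide),
    Finset.sum_insert (by decide), Finset.sum_insert (by decide),
    Finset.sum_insert (by decide), Finset.sum_singleton]
  ring

lemma rhv3_eq (B : List (Fin 3 × ℝ) → ℝ) (v : Fin 3 → ℝ) (σ : Equiv.Perm (Fin 3)) :
    randHiredValue 3 B v σ =
      v (σ 0) * B [(σ 0, v (σ 0))] +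
      v (σ 1) * B [(σ 0, v (σ 0)), (σ 1, v (σ 1))] * (1 - B [(σ 0, v (σ 0))]) +
      v (σ 2) * B [(σ 0, v (σ 0)), (σ 1, v (σ 1)), (σ 2, v (σ 2))] *
        ((1 - B [(σ 0, v (σ 0))]) * (1 - B [(σ 0, v (σ 0)), (σ 1, v (σ 1))])) := by
  have l0 : (List.finRange 3).take ((0:Fin 3).1+1) = [0] := by decide
  have l1 : (List.finRange 3).take ((1:Fin 3).1+1) = [0, 1] := by decide
  have l2 : (List.finRange 3).take ((2:Fin 3).1+1) = [0, 1, 2] := by decide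
  have f0 : Finset.univ.filter (fun j : Fin 3 => j < 0) = ∅ := by decide
  have f1 : Finset.univ.filter (fun j : Fin 3 => j < 1) = {0} := by decide
  have f2 : Finset.univ.filter (fun j : Fin 3 => j < 2) = {0, 1} := by decide
  unfold randHiredValue
  rw [Fin.sum_univ_three, f0, f1, f2]
  rw [Finset.prod_empty, Finset.prod_singleton, Finset.prod_insert (by decide),
    Finset.prod_singleton]
  rw [l0, l1, l2]
  simp only [List.map]
  ring

lemma sum_expand (B : List (Fin 3 × ℝ) → ℝ) (v : Fin 3 → ℝ) :
    ∑ σ : Equiv.Perm (Fin 3), randHiredValue 3 B v σ =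
      (v 0 * B [(0, v 0)] + v 1 * B [(0, v 0), (1, v 1)] * (1 - B [(0, v 0)]) +
        v 2 * B [(0, v 0), (1, v 1), (2, v 2)] *
          ((1 - B [(0, v 0)]) * (1 - B [(0, v 0), (1, v 1)]))) +
      (v 0 * B [(0, v 0)] + v 2 * B [(0, v 0), (2, v 2)] * (1 - B [(0, v 0)]) +
        v 1 * B [(0, v 0), (2, v 2), (1, v 1)] *
          ((1 - B [(0, v 0)]) * (1 - B [(0, v 0), (2, v 2)]))) +
      (v 1 * B [(1, v 1)] + v 0 * B [(1, v 1), (0, v 0)] * (1 - B [(1, v 1)]) +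
        v 2 * B [(1, v 1), (0, v 0), (2, v 2)] *
          ((1 - B [(1, v 1)]) * (1 - B [(1, v 1), (0, v 0)]))) +
      (v 1 * B [(1, v 1)] + v 2 * B [(1, v 1), (2, v 2)] * (1 - B [(1, v 1)]) +
        v 0 * B [(1, v 1), (2, v 2), (0, v 0)] *
          ((1 - B [(1, v 1)]) * (1 - B [(1, v 1), (2, v 2)]))) +
      (v 2 * B [(2, v 2)] + v 0 * B [(2, v 2), (0, v 0)] * (1 - B [(2, v 2)]) +
        v 1 * B [(2, v 2), (0, v 0), (1, v 1)] *
          ((1 - B [(2, v 2)]) * (1 - B [(2, v 2), (0, v 0)]))) +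
      (v 2 * B [(2, v 2)] + v 1 * B [(2, v 2), (1, v 1)] * (1 - B [(2, v 2)]) +
        v 0 * B [(2, v 2), (1, v 1), (0, v 0)] *
          ((1 - B [(2, v 2)]) * (1 - B [(2, v 2), (1, v 1)]))) := by
  rw [sum_perm3]
  simp only [rhv3_eq, Equiv.refl_apply, s021_0, s021_1, s021_2, s102_0, s102_1, s102_2,
    s120_0, s120_1, s120_2, s201_0, s201_1, s201_2, s210_0, s210_1, s210_2]

section
variable (x y u w z : ℝ)

lemma aux_prod_le_one (hu : 0 ≤ u) (hu' : u ≤ 1) (hw : 0 ≤ w) (hw' : w ≤ 1)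
    (hz : 0 ≤ z) (hz' : z ≤ 1) : z * ((1 - u) * (1 - w)) ≤ 1 := by
  have p2 : 0 ≤ (1 - u) * (1 - w) := mul_nonneg (by linarith) (by linarith)
  have p1 : (1 - u) * (1 - w) ≤ 1 := by nlinarith
  nlinarith [mul_le_mul_of_nonneg_right hz' p2]

lemma prob_sum_le (v0 v1 v2 M : ℝ) (h0' : v0 ≤ M) (h1 : 0 ≤ v1) (h1' : v1 ≤ M)
    (h2 : 0 ≤ v2) (h2' : v2 ≤ M) (hu : 0 ≤ u) (hu' : u ≤ 1) (hw : 0 ≤ w) (hw' : w ≤ 1)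
    (hz : 0 ≤ z) (hz' : z ≤ 1) :
    v0 * u + v1 * w * (1 - u) + v2 * z * ((1 - u) * (1 - w)) ≤ M := by
  have e1 : v0 * u ≤ M * u := mul_le_mul_of_nonneg_right h0' hu
  have e2 : v1 * (w * (1 - u)) ≤ M * (w * (1 - u)) :=
    mul_le_mul_of_nonneg_right h1' (mul_nonneg hw (by linarith))
  have e3 : v2 * z ≤ M := le_trans (mul_le_of_le_one_right h2 hz') h2'
  have e3' : v2 * z * ((1 - u) * (1 - w)) ≤ M * ((1 - u) * (1 - w)) :=
    mul_le_mul_of_nonneg_right e3 (mul_nonneg (by linarith) (by linarith))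
  nlinarith [e1, e2, e3']

lemma prob_sum_first (v1 v2 : ℝ) (h1 : 0 ≤ v1) (h1' : v1 ≤ 1)
    (h2 : 0 ≤ v2) (h2' : v2 ≤ 1) (hu : 0 ≤ u) (hu' : u ≤ 1) (hw : 0 ≤ w) (hw' : w ≤ 1)
    (hz : 0 ≤ z) (hz' : z ≤ 1) :
    2 * u + v1 * w * (1 - u) + v2 * z * ((1 - u) * (1 - w)) ≤ 1 + u := by
  have e2 : v1 * (w * (1 - u)) ≤ 1 * (w * (1 - u)) :=
    mul_le_mul_of_nonneg_right h1' (mul_nonneg hw (by linarith))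
  have e3 : v2 * z ≤ 1 := le_trans (mul_le_of_le_one_right h2 hz') h2'
  have e3' : v2 * z * ((1 - u) * (1 - w)) ≤ 1 * ((1 - u) * (1 - w)) :=
    mul_le_mul_of_nonneg_right e3 (mul_nonneg (by linarith) (by linarith))
  nlinarith [e2, e3']

lemma hub1 (hx : 0 ≤ x) (hy : 0 ≤ y) (hu : 0 ≤ u) (hu' : u ≤ 1)
    (hw : 0 ≤ w) (hw' : w ≤ 1) (hz : 0 ≤ z) (hz' : z ≤ 1) :
    x * u + 2 * w * (1 - u) + y * z * ((1 - u) * (1 - w)) ≤ x + 2 + y * (1 - u) := by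
  have a1 : x * u ≤ x := mul_le_of_le_one_right hx hu'
  have a2 : 2 * w * (1 - u) ≤ 2 := by nlinarith
  have a3 : y * z * ((1 - u) * (1 - w)) ≤ y * (1 - u) := by
    have h1 : z * (1 - w) ≤ 1 := by nlinarith
    have h2 : 0 ≤ y * (1 - u) := mul_nonneg hy (by linarith)
    nlinarith [mul_le_of_le_one_right h2 h1]
  linarith

lemma hub2 (hx : 0 ≤ x) (hy : 0 ≤ y) (hu : 0 ≤ u) (hu' : u ≤ 1)
    (hw : 0 ≤ w) (hw' : w ≤ 1) (hz : 0 ≤ z) (hz' : z ≤ 1) :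
    x * u + y * w * (1 - u) + 2 * z * ((1 - u) * (1 - w)) ≤ x + 2 + y * (1 - u) := by
  have a1 : x * u ≤ x := mul_le_of_le_one_right hx hu'
  have a2 : y * w * (1 - u) ≤ y * (1 - u) := by
    have h2 : 0 ≤ y * (1 - u) := mul_nonneg hy (by linarith)
    nlinarith [mul_le_of_le_one_right h2 hw']
  have a3 : 2 * z * ((1 - u) * (1 - w)) ≤ 2 := by
    nlinarith [aux_prod_le_one u w z hu hu' hw hw' hz hz']
  linarith

lemma hub3 (hx : 0 ≤ x) (hy : 0 ≤ y) (hu : 0 ≤ u) (hu' : u ≤ 1)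
    (hw : 0 ≤ w) (hw' : w ≤ 1) (hz : 0 ≤ z) (hz' : z ≤ 1) :
    x * u + 2 * w * (1 - u) + y * z * ((1 - u) * (1 - w)) ≤ x * u + 2 + y := by
  have a2 : 2 * w * (1 - u) ≤ 2 := by nlinarith
  have a3 : y * z * ((1 - u) * (1 - w)) ≤ y := by
    have h1 := aux_prod_le_one u w z hu hu' hw hw' hz hz'
    have h2 : 0 ≤ z * ((1 - u) * (1 - w)) :=
      mul_nonneg hz (mul_nonneg (by linarith) (by linarith))
    nlinarith [mul_le_of_le_one_right hy h1]
  linarith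

lemma hub4 (hx : 0 ≤ x) (hy : 0 ≤ y) (hu : 0 ≤ u) (hu' : u ≤ 1)
    (hw : 0 ≤ w) (hw' : w ≤ 1) (hz : 0 ≤ z) (hz' : z ≤ 1) :
    x * u + y * w * (1 - u) + 2 * z * ((1 - u) * (1 - w)) ≤ x * u + 2 + y := by
  have a2 : y * w * (1 - u) ≤ y := by
    have h1 : w * (1 - u) ≤ 1 := by nlinarith
    nlinarith [mul_le_of_le_one_right hy h1]
  have a3 : 2 * z * ((1 - u) * (1 - w)) ≤ 2 := by
    nlinarith [aux_prod_le_one u w z hu hu' hw hw' hz hz']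
  linarith

end

/-- Step-1 master bound: on the instance matching the predictions `(2,1,1)`,
the expected value is at most `10 + 2 * B [(0,2)]` over the six permutations. -/
lemma master0 (B : List (Fin 3 × ℝ) → ℝ) (hB : ∀ h, 0 ≤ B h ∧ B h ≤ 1) :
    (∑ σ : Equiv.Perm (Fin 3), randHiredValue 3 B (vxy 1 1) σ) ≤
      10 + 2 * B [((0:Fin 3), (2:ℝ))] := by
  rw [sum_expand]
  simp only [vxy0, vxy1, vxy2]
  have H1 := prob_sum_first (B [((0:Fin 3), (2:ℝ))])
    (B [((0:Fin 3), (2:ℝ)), ((1:Fin 3), (1:ℝ))])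
    (B [((0:Fin 3), (2:ℝ)), ((1:Fin 3), (1:ℝ)), ((2:Fin 3), (1:ℝ))]) 1 1
    (by norm_num) (by norm_num) (by norm_num) (by norm_num)
    (hB _).1 (hB _).2 (hB _).1 (hB _).2 (hB _).1 (hB _).2
  have H2 := prob_sum_first (B [((0:Fin 3), (2:ℝ))])
    (B [((0:Fin 3), (2:ℝ)), ((2:Fin 3), (1:ℝ))])
    (B [((0:Fin 3), (2:ℝ)), ((2:Fin 3), (1:ℝ)), ((1:Fin 3), (1:ℝ))]) 1 1
    (by norm_num) (by norm_num) (by norm_num) (by norm_num)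
    (hB _).1 (hB _).2 (hB _).1 (hB _).2 (hB _).1 (hB _).2
  have H3 := prob_sum_le (B [((1:Fin 3), (1:ℝ))])
    (B [((1:Fin 3), (1:ℝ)), ((0:Fin 3), (2:ℝ))])
    (B [((1:Fin 3), (1:ℝ)), ((0:Fin 3), (2:ℝ)), ((2:Fin 3), (1:ℝ))]) 1 2 1 2
    (by norm_num) (by norm_num) (by norm_num) (by norm_num) (by norm_num)
    (hB _).1 (hB _).2 (hB _).1 (hB _).2 (hB _).1 (hB _).2
  have H4 := prob_sum_le (B [((1:Fin 3), (1:ℝ))])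
    (B [((1:Fin 3), (1:ℝ)), ((2:Fin 3), (1:ℝ))])
    (B [((1:Fin 3), (1:ℝ)), ((2:Fin 3), (1:ℝ)), ((0:Fin 3), (2:ℝ))]) 1 1 2 2
    (by norm_num) (by norm_num) (by norm_num) (by norm_num) (by norm_num)
    (hB _).1 (hB _).2 (hB _).1 (hB _).2 (hB _).1 (hB _).2
  have H5 := prob_sum_le (B [((2:Fin 3), (1:ℝ))])
    (B [((2:Fin 3), (1:ℝ)), ((0:Fin 3), (2:ℝ))])
    (B [((2:Fin 3), (1:ℝ)), ((0:Fin 3), (2:ℝ)), ((1:Fin 3), (1:ℝ))]) 1 2 1 2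
    (by norm_num) (by norm_num) (by norm_num) (by norm_num) (by norm_num)
    (hB _).1 (hB _).2 (hB _).1 (hB _).2 (hB _).1 (hB _).2
  have H6 := prob_sum_le (B [((2:Fin 3), (1:ℝ))])
    (B [((2:Fin 3), (1:ℝ)), ((1:Fin 3), (1:ℝ))])
    (B [((2:Fin 3), (1:ℝ)), ((1:Fin 3), (1:ℝ)), ((0:Fin 3), (2:ℝ))]) 1 1 2 2
    (by norm_num) (by norm_num) (by norm_num) (by norm_num) (by norm_num)
    (hB _).1 (hB _).2 (hB _).1 (hB _).2 (hB _).1 (hB _).2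
  linarith

/-- Instance-(2,x,y) upper bound keeping the `y`-terms. -/
lemma masterI (B : List (Fin 3 × ℝ) → ℝ) (hB : ∀ h, 0 ≤ B h ∧ B h ≤ 1)
    (ha : B [((0:Fin 3), (2:ℝ))] = 1) (x y : ℝ) (hx : 0 < x) (hy : 0 < y) :
    (∑ σ : Equiv.Perm (Fin 3), randHiredValue 3 B (vxy x y) σ) ≤
      12 + 4*x + 2*y*(1 - B [((1:Fin 3), x)]) + 2*y*(B [((2:Fin 3), y)]) := by
  rw [sum_expand]
  simp only [vxy0, vxy1, vxy2]
  rw [ha]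
  have H3 := hub1 x y (B [((1:Fin 3), x)])
    (B [((1:Fin 3), x), ((0:Fin 3), (2:ℝ))])
    (B [((1:Fin 3), x), ((0:Fin 3), (2:ℝ)), ((2:Fin 3), y)])
    hx.le hy.le (hB _).1 (hB _).2 (hB _).1 (hB _).2 (hB _).1 (hB _).2
  have H4 := hub2 x y (B [((1:Fin 3), x)])
    (B [((1:Fin 3), x), ((2:Fin 3), y)])
    (B [((1:Fin 3), x), ((2:Fin 3), y), ((0:Fin 3), (2:ℝ))])
    hx.le hy.le (hB _).1 (hB _).2 (hB _).1 (hB _).2 (hB _).1 (hB _).2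
  have H5 := hub3 y x (B [((2:Fin 3), y)])
    (B [((2:Fin 3), y), ((0:Fin 3), (2:ℝ))])
    (B [((2:Fin 3), y), ((0:Fin 3), (2:ℝ)), ((1:Fin 3), x)])
    hy.le hx.le (hB _).1 (hB _).2 (hB _).1 (hB _).2 (hB _).1 (hB _).2
  have H6 := hub4 y x (B [((2:Fin 3), y)])
    (B [((2:Fin 3), y), ((1:Fin 3), x)])
    (B [((2:Fin 3), y), ((1:Fin 3), x), ((0:Fin 3), (2:ℝ))])
    hy.le hx.le (hB _).1 (hB _).2 (hB _).1 (hB _).2 (hB _).1 (hB _).2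
  nlinarith [H3, H4, H5, H6]

/-- Instance-(2,x,y) upper bound keeping the `x`-terms. -/
lemma masterII (B : List (Fin 3 × ℝ) → ℝ) (hB : ∀ h, 0 ≤ B h ∧ B h ≤ 1)
    (ha : B [((0:Fin 3), (2:ℝ))] = 1) (x y : ℝ) (hx : 0 < x) (hy : 0 < y) :
    (∑ σ : Equiv.Perm (Fin 3), randHiredValue 3 B (vxy x y) σ) ≤
      12 + 4*y + 2*x*(B [((1:Fin 3), x)]) + 2*x*(1 - B [((2:Fin 3), y)]) := by
  rw [sum_expand]
  simp only [vxy0, vxy1, vxy2]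
  rw [ha]
  have H3 := hub3 x y (B [((1:Fin 3), x)])
    (B [((1:Fin 3), x), ((0:Fin 3), (2:ℝ))])
    (B [((1:Fin 3), x), ((0:Fin 3), (2:ℝ)), ((2:Fin 3), y)])
    hx.le hy.le (hB _).1 (hB _).2 (hB _).1 (hB _).2 (hB _).1 (hB _).2
  have H4 := hub4 x y (B [((1:Fin 3), x)])
    (B [((1:Fin 3), x), ((2:Fin 3), y)])
    (B [((1:Fin 3), x), ((2:Fin 3), y), ((0:Fin 3), (2:ℝ))])
    hx.le hy.le (hB _).1 (hB _).2 (hB _).1 (hB _).2 (hB _).1 (hB _).2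
  have H5 := hub1 y x (B [((2:Fin 3), y)])
    (B [((2:Fin 3), y), ((0:Fin 3), (2:ℝ))])
    (B [((2:Fin 3), y), ((0:Fin 3), (2:ℝ)), ((1:Fin 3), x)])
    hy.le hx.le (hB _).1 (hB _).2 (hB _).1 (hB _).2 (hB _).1 (hB _).2
  have H6 := hub2 y x (B [((2:Fin 3), y)])
    (B [((2:Fin 3), y), ((1:Fin 3), x)])
    (B [((2:Fin 3), y), ((1:Fin 3), x), ((0:Fin 3), (2:ℝ))])
    hy.le hx.le (hB _).1 (hB _).2 (hB _).1 (hB _).2 (hB _).1 (hB _).2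
  nlinarith [H3, H4, H5, H6]

end RHaux

open RHaux in
/-- for every `C > 0` and every randomized algorithm for the classical secretary
problem with predictions in the random-order model, there is an instance `(n, v, v̂)` with `v`
strictly positive on which the algorithm's expected hired value is below
`max {1 - Cε, 0.348} · max_i v(i)`, where `ε = max_i |1 - v̂(i)/v(i)|`. -/
theorem randomized_hardness (C : ℝ) (hC : 0 < C)
    (A : (n : ℕ) → (Fin n → ℝ) → List (Fin n × ℝ) → ℝ)
    (hA : ∀ n vhat h, A n vhat h ∈ Set.Icc (0 : ℝ) 1) :
    ∃ (n : ℕ) (v vhat : Fin n → ℝ), 0 < n ∧ (∀ i, 0 < v i) ∧ (∀ i, 0 ≤ vhat i) ∧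
      (∑ σ : Equiv.Perm (Fin n), randHiredValue n (A n vhat) v σ) / (n.factorial : ℝ) <
        max (1 - C * ⨆ i, |1 - vhat i / v i|) 0.348 * ⨆ i, v i := by
  by_contra hcon
  push_neg at hcon
  -- the algorithm for our fixed prediction vector (2,1,1)
  set B : List (Fin 3 × ℝ) → ℝ := A 3 (vxy 1 1) with hBdef
  have hB : ∀ h, 0 ≤ B h ∧ B h ≤ 1 := fun h => ⟨(hA 3 (vxy 1 1) h).1, (hA 3 (vxy 1 1) h).2⟩
  have hb : ∀ v : Fin 3 → ℝ, BddAbove (Set.range v) := fun v => (Set.finite_range v).bddAbove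
  have hfact : (((3:ℕ).factorial : ℝ)) = 6 := by norm_num [Nat.factorial]
  have hvh_nn : ∀ i, (0:ℝ) ≤ vxy 1 1 i := fun i => (vxy_pos one_pos one_pos i).le
  have key : ∀ w : Fin 3 → ℝ, (∀ i, 0 < w i) →
      max (1 - C * ⨆ i, |1 - vxy 1 1 i / w i|) 0.348 * (⨆ i, w i) ≤
        (∑ σ : Equiv.Perm (Fin 3), randHiredValue 3 B w σ) / 6 := by
    intro w hw
    have := hcon 3 w (vxy 1 1) (by norm_num) hw hvh_nn
    rwa [hfact] at this
  -- Step 1: on the instance with perfect predictions, the candidate with the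
  -- highest prediction must be hired at once, with probability one.
  have hsup1 : (⨆ i, vxy (1:ℝ) 1 i) = 2 := by
    refine le_antisymm (ciSup_le fun i => ?_) ?_
    · fin_cases i <;> norm_num [vxy, Fin.ext_iff]
    · have h0 := le_ciSup (hb (vxy (1:ℝ) 1)) 0
      simpa using h0
  have heps1 : (⨆ i, |1 - vxy (1:ℝ) 1 i / vxy 1 1 i|) = 0 := by
    have hfun : ∀ i : Fin 3, |1 - vxy (1:ℝ) 1 i / vxy 1 1 i| = 0 := by
      intro i; fin_cases i <;> norm_num [vxy, Fin.ext_iff]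
    calc (⨆ i, |1 - vxy (1:ℝ) 1 i / vxy 1 1 i|) = ⨆ _ : Fin 3, (0:ℝ) := by
          congr 1; funext i; exact hfun i
      _ = 0 := ciSup_const
  have step1 := key (vxy 1 1) (vxy_pos one_pos one_pos)
  rw [hsup1, heps1, mul_zero, sub_zero] at step1
  rw [max_eq_left (by norm_num), one_mul] at step1
  have hm0 := master0 B hB
  have ha : B [((0:Fin 3), (2:ℝ))] = 1 :=
    le_antisymm (hB _).2 (by linarith)
  -- Step 2: the two robustness inequalities for instances (2, x, y)
  have I1 : ∀ x y : ℝ, 0 < x → 0 < y →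
      2.088 * y ≤ 12 + 4*x + 2*y*(1 - B [((1:Fin 3), x)]) + 2*y*(B [((2:Fin 3), y)]) := by
    intro x y hx hy
    have hkey := key (vxy x y) (vxy_pos hx hy)
    have hsy : y ≤ ⨆ i, vxy x y i := by
      have h2 := le_ciSup (hb (vxy x y)) 2
      simpa using h2
    have hsupnn : (0:ℝ) ≤ ⨆ i, vxy x y i := le_trans hy.le hsy
    have hlow : 0.348 * y ≤
        max (1 - C * ⨆ i, |1 - vxy 1 1 i / vxy x y i|) 0.348 * ⨆ i, vxy x y i := by
      calc 0.348 * y ≤ 0.348 * ⨆ i, vxy x y i :=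
            mul_le_mul_of_nonneg_left hsy (by norm_num)
        _ ≤ _ := mul_le_mul_of_nonneg_right (le_max_right _ _) hsupnn
    have hup := masterI B hB ha x y hx hy
    linarith
  have I2 : ∀ x y : ℝ, 0 < x → 0 < y →
      2.088 * x ≤ 12 + 4*y + 2*x*(B [((1:Fin 3), x)]) + 2*x*(1 - B [((2:Fin 3), y)]) := by
    intro x y hx hy
    have hkey := key (vxy x y) (vxy_pos hx hy)
    have hsx : x ≤ ⨆ i, vxy x y i := by
      have h1 := le_ciSup (hb (vxy x y)) 1
      simpa using h1
    have hsupnn : (0:ℝ) ≤ ⨆ i, vxy x y i := le_trans hx.le hsx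
    have hlow : 0.348 * x ≤
        max (1 - C * ⨆ i, |1 - vxy 1 1 i / vxy x y i|) 0.348 * ⨆ i, vxy x y i := by
      calc 0.348 * x ≤ 0.348 * ⨆ i, vxy x y i :=
            mul_le_mul_of_nonneg_left hsx (by norm_num)
        _ ≤ _ := mul_le_mul_of_nonneg_right (le_max_right _ _) hsupnn
    have hup := masterII B hB ha x y hx hy
    linarith
  -- Step 3: chain the inequalities along a geometric sequence of values
  have chain : ∀ k : ℕ, 0.072 * (k:ℝ) ≤ B [((1:Fin 3), (1000:ℝ)^(2*k+1))] := by
    intro k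
    induction k with
    | zero =>
      have h0 := (hB [((1:Fin 3), (1000:ℝ)^(2*0+1))]).1
      simpa using h0
    | succ k ih =>
      have hx1 : (1:ℝ) ≤ (1000:ℝ)^(2*k+1) := one_le_pow₀ (by norm_num)
      have hxy : (1000:ℝ)^(2*k+2) = 1000 * (1000:ℝ)^(2*k+1) := by ring
      have hyx' : (1000:ℝ)^(2*k+3) = 1000 * (1000:ℝ)^(2*k+2) := by ring
      have hxpos : (0:ℝ) < (1000:ℝ)^(2*k+1) := by positivity
      have hypos : (0:ℝ) < (1000:ℝ)^(2*k+2) := by positivity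
      have hx'pos : (0:ℝ) < (1000:ℝ)^(2*k+3) := by positivity
      have hy1 : (1:ℝ) ≤ (1000:ℝ)^(2*k+2) := one_le_pow₀ (by norm_num)
      have hI := I1 ((1000:ℝ)^(2*k+1)) ((1000:ℝ)^(2*k+2)) hxpos hypos
      have hII := I2 ((1000:ℝ)^(2*k+3)) ((1000:ℝ)^(2*k+2)) hx'pos hypos
      have hs1 : B [((1:Fin 3), (1000:ℝ)^(2*k+1))] + 0.036 ≤
          B [((2:Fin 3), (1000:ℝ)^(2*k+2))] := by
        by_contra hcn
        push_neg at hcn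
        have hprod : 0 < (1000:ℝ)^(2*k+2) *
            (B [((1:Fin 3), (1000:ℝ)^(2*k+1))] + 0.036 - B [((2:Fin 3), (1000:ℝ)^(2*k+2))]) :=
          mul_pos hypos (by linarith)
        nlinarith [hI, hx1, hxy, hprod]
      have hs2 : B [((2:Fin 3), (1000:ℝ)^(2*k+2))] + 0.036 ≤
          B [((1:Fin 3), (1000:ℝ)^(2*k+3))] := by
        by_contra hcn
        push_neg at hcn
        have hprod : 0 < (1000:ℝ)^(2*k+3) *
            (B [((2:Fin 3), (1000:ℝ)^(2*k+2))] + 0.036 - B [((1:Fin 3), (1000:ℝ)^(2*k+3))]) :=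
          mul_pos hx'pos (by linarith)
        nlinarith [hII, hy1, hyx', hprod]
      have hexp : 2*(k+1)+1 = 2*k+3 := by ring
      rw [hexp]
      push_cast
      linarith
  have hend := chain 15
  have hle1 := (hB [((1:Fin 3), (1000:ℝ)^31)]).2
  push_cast at hend
  exact absurd (hend.trans hle1) (by norm_num)
end

section
/- Fix a capacity k ≥ 2 and a parameter θ ≥ 0, and let M = {i ∈ N : |1 − v̂(i)/v(i)| > θ}. Suppose 1 ≤ |M| ≤ √k · ln k. In a run of the learned Kleinberg algorithm with parameter θ, let S = Ŝ ∩ Y be the set of candidates hired strictly before the arrival of the first candidate of M (Y being the set of candidates arriving before that time) and let k' = k − |S| − 1. Then Pr(k' ≥ √k · ln k) ≥ 1 − 3 ln k/√k, the probability being over the i.i.d. uniform arrival times. -/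
set_option maxHeartbeats 1000000


open MeasureTheory

/-- The distribution of the i.i.d. uniform-on-`[0,1]` arrival times of the `n` candidates. -/
noncomputable def uniformArrivals (n : ℕ) : Measure (Fin n → ℝ) :=
  Measure.pi fun _ => volume.restrict (Set.Icc (0 : ℝ) 1)

instance uniformBase_isProbability : IsProbabilityMeasure (volume.restrict (Set.Icc (0 : ℝ) 1)) := by
  constructor
  rw [Measure.restrict_apply_univ, Real.volume_Icc]
  norm_num

instance uniformArrivals_isProbability (n : ℕ) : IsProbabilityMeasure (uniformArrivals n) := by
  unfold uniformArrivals; infer_instance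

lemma uniform_eval_preimage (n : ℕ) (i : Fin n) {S : Set ℝ} (hS : MeasurableSet S) :
    uniformArrivals n (Function.eval i ⁻¹' S) = volume.restrict (Set.Icc (0 : ℝ) 1) S := by
  classical
  rw [uniformArrivals, Set.eval_preimage, Measure.pi_pi]
  have h1 : ∀ j ∈ Finset.univ, j ∉ ({i} : Finset (Fin n)) →
      (volume.restrict (Set.Icc (0 : ℝ) 1))
        (Function.update (fun _ : Fin n => (Set.univ : Set ℝ)) i S j) = 1 := by
    intro j _ hj
    rw [Function.update_of_ne (by simpa using hj)]
    exact measure_univ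
  rw [← Finset.prod_subset (Finset.subset_univ ({i} : Finset (Fin n))) h1,
    Finset.prod_singleton, Function.update_self]

lemma uniform_eval_preimage_inter (n : ℕ) {i j : Fin n} (hij : i ≠ j) {S T : Set ℝ}
    (hS : MeasurableSet S) (hT : MeasurableSet T) :
    uniformArrivals n (Function.eval i ⁻¹' S ∩ Function.eval j ⁻¹' T) =
      volume.restrict (Set.Icc (0 : ℝ) 1) S * volume.restrict (Set.Icc (0 : ℝ) 1) T := by
  classical
  set F : Fin n → Set ℝ := fun a => if a = i then S else if a = j then T else Set.univ with hF
  have hset : Function.eval i ⁻¹' S ∩ Function.eval j ⁻¹' T = Set.pi Set.univ F := by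
    ext t
    simp only [Set.mem_inter_iff, Set.mem_preimage, Set.mem_univ_pi, Function.eval, hF]
    constructor
    · rintro ⟨h1, h2⟩ a
      by_cases ha : a = i
      · subst ha; simp [h1]
      · by_cases ha' : a = j
        · subst ha'; simp [ha, h2]
        · simp [ha, ha']
    · intro h
      constructor
      · have := h i; simpa using this
      · have := h j; simpa [Ne.symm hij] using this
  rw [uniformArrivals, hset, Measure.pi_pi]
  have h1 : ∀ a ∈ Finset.univ, a ∉ ({i, j} : Finset (Fin n)) →
      (volume.restrict (Set.Icc (0 : ℝ) 1)) (F a) = 1 := by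
    intro a _ ha
    simp only [Finset.mem_insert, Finset.mem_singleton, not_or] at ha
    simp only [hF, if_neg ha.1, if_neg ha.2]
    exact measure_univ
  rw [← Finset.prod_subset (Finset.subset_univ ({i, j} : Finset (Fin n))) h1,
    Finset.prod_pair hij]
  simp [hF, Ne.symm hij]

lemma uniform_indepFun_eval (n : ℕ) {i j : Fin n} (hij : i ≠ j) :
    ProbabilityTheory.IndepFun (Function.eval i) (Function.eval j) (uniformArrivals n) := by
  rw [ProbabilityTheory.indepFun_iff_measure_inter_preimage_eq_mul]
  intro s t hs ht
  rw [uniform_eval_preimage_inter n hij hs ht, uniform_eval_preimage n i hs,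
    uniform_eval_preimage n j ht]

/-- for capacity `k ≥ 2`, threshold `θ ≥ 0`, and
`M = {i : |1 - v̂(i)/v(i)| > θ}` with `1 ≤ |M| ≤ √k · ln k`, in a run of learned Kleinberg the
remaining capacity `k' = k - |S| - 1` at the switch (where `S = Ŝ ∩ Y` is the set of
candidates of `Ŝ` arriving strictly before the first arrival `i` of a candidate of `M`)
satisfies `k' ≥ √k · ln k` with probability at least `1 - 3 ln k/√k` over the i.i.d. uniform
arrival times. -/
theorem learned_kleinberg_kprime_large (n k : ℕ) (hk : 2 ≤ k) (θ : ℝ) (hθ : 0 ≤ θ)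
    (v vhat : Fin n → ℝ) (hv : ∀ i, 0 < v i) (hvhat : ∀ i, 0 ≤ vhat i)
    (Shat : Finset (Fin n)) (hScard : Shat.card ≤ k)
    (hSmax : ∀ S : Finset (Fin n), S.card ≤ k → ∑ i ∈ S, vhat i ≤ ∑ i ∈ Shat, vhat i)
    (hM1 : 1 ≤ (Finset.univ.filter fun i : Fin n => θ < |1 - vhat i / v i|).card)
    (hM2 : ((Finset.univ.filter fun i : Fin n => θ < |1 - vhat i / v i|).card : ℝ) ≤
      Real.sqrt k * Real.log k) :
    ENNReal.ofReal (1 - 3 * Real.log k / Real.sqrt k) ≤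
      uniformArrivals n
        {t | ∃ i ∈ Finset.univ.filter fun i' : Fin n => θ < |1 - vhat i' / v i'|,
          (∀ j ∈ Finset.univ.filter fun i' : Fin n => θ < |1 - vhat i' / v i'|, t i ≤ t j) ∧
            Real.sqrt k * Real.log k ≤
              (k : ℝ) - ((Shat.filter fun l => t l < t i).card : ℝ) - 1} := by
  classical
  set L := Real.log k with hLdef
  set R := Real.sqrt k with hRdef
  by_cases htriv : 1 - 3 * L / R ≤ 0
  · rw [ENNReal.ofReal_eq_zero.2 htriv]
    exact zero_le
  push_neg at htriv
  -- basic numeric facts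
  have hk0 : (0 : ℝ) < k := by positivity
  have hk2 : (2 : ℝ) ≤ (k : ℝ) := by exact_mod_cast hk
  have hR0 : 0 < R := Real.sqrt_pos.2 hk0
  have hR2 : R ^ 2 = (k : ℝ) := Real.sq_sqrt hk0.le
  have h3L : 3 * L < R := (div_lt_one hR0).1 (sub_pos.1 htriv)
  clear htriv hM2 hSmax hθ hv hvhat
  have hl2 : (0.6931471803 : ℝ) < Real.log 2 := Real.log_two_gt_d9
  have hL2 : Real.log 2 ≤ L := Real.log_le_log (by norm_num) hk2
  have hL0 : 0 < L := by linarith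
  have hk4 : (4 : ℝ) < (k : ℝ) := by nlinarith
  have hlog4 : Real.log 4 ≤ L := Real.log_le_log (by norm_num) (by linarith)
  have h4eq : Real.log 4 = 2 * Real.log 2 := by
    rw [show (4 : ℝ) = 2 ^ 2 by norm_num, Real.log_pow]
    push_cast; ring
  have hL138 : (1.386 : ℝ) < L := by rw [h4eq] at hlog4; linarith
  have hk17 : (16 : ℝ) ≤ (k : ℝ) := by nlinarith
  have hlog16 : Real.log 16 ≤ L := Real.log_le_log (by norm_num) hk17
  have h16eq : Real.log 16 = 4 * Real.log 2 := by
    rw [show (16 : ℝ) = 2 ^ 4 by norm_num, Real.log_pow]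
    push_cast; ring
  have hL25 : (5 / 2 : ℝ) < L := by rw [h16eq] at hlog16; linarith
  -- abbreviations
  set δ : ℝ := 2 * L / R with hδdef
  set x : ℝ := R * L with hxdef
  have hδ0 : 0 < δ := by positivity
  have hδ23 : δ < 2 / 3 := by
    rw [hδdef, div_lt_iff₀ hR0]; nlinarith
  set c : ℝ := 1 - δ with hcdef
  have hc0 : 0 ≤ c := by rw [hcdef]; linarith
  have hc1 : c ≤ 1 := by rw [hcdef]; linarith
  have hRge2 : (2 : ℝ) ≤ R := by nlinarith
  have hx2R : 2 * R ≤ x - 1 := by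
    have h := mul_le_mul hRge2 (by linarith : (1 / 2 : ℝ) ≤ L - 2) (by norm_num)
      (by linarith : (0 : ℝ) ≤ R)
    rw [hxdef]; nlinarith
  have hx1pos : (0 : ℝ) < x - 1 := by linarith
  have hxk : 2 * (k : ℝ) ≤ (x - 1) ^ 2 := by
    have h := mul_le_mul hx2R hx2R (by linarith) (by linarith)
    nlinarith [h, hR2]
  have hkδ : (k : ℝ) * δ = 2 * x := by
    rw [hδdef, hxdef, ← hR2]; field_simp
  have hscast : ((Shat.card : ℝ)) ≤ (k : ℝ) := by exact_mod_cast hScard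
  have hA1 : c - c ^ 2 ≤ δ := by nlinarith
  have hA2 : (Shat.card : ℝ) * (c - c ^ 2) ≤ 2 * x := by
    have hcc : 0 ≤ c - c ^ 2 := by nlinarith
    have h := mul_le_mul hscast hA1 hcc hk0.le
    nlinarith [hkδ]
  have hA3 : 2 * x * (k : ℝ) ≤ x * (x - 1) ^ 2 := by nlinarith [mul_pos hR0 hL0]
  have hA4 : (k : ℝ) * c = (k : ℝ) - 2 * x := by
    rw [hcdef]; nlinarith [hkδ]
  -- the measure
  set μ := uniformArrivals n with hμdef
  haveI : IsProbabilityMeasure μ := uniformArrivals_isProbability n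
  -- the set M and a fixed element of it
  set M := Finset.univ.filter fun i : Fin n => θ < |1 - vhat i / v i| with hMdef
  obtain ⟨i₀, hi₀⟩ : M.Nonempty := Finset.card_pos.1 (by omega)
  -- the indicator random variables
  set X : Fin n → (Fin n → ℝ) → ℝ :=
    fun l => (Function.eval l ⁻¹' Set.Iio c).indicator fun _ => (1 : ℝ) with hXdef
  set g : (Fin n → ℝ) → ℝ := ∑ l ∈ Shat, X l with hgdef
  have hCyl : ∀ l : Fin n,
      MeasurableSet (Function.eval (β := fun _ : Fin n => ℝ) l ⁻¹' Set.Iio c) := by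
    intro l
    exact (measurable_pi_apply l) (measurableSet_Iio (a := c))
  have hmeasCyl : ∀ l : Fin n,
      μ (Function.eval (β := fun _ : Fin n => ℝ) l ⁻¹' Set.Iio c) = ENNReal.ofReal c := by
    intro l
    rw [hμdef, uniform_eval_preimage n l measurableSet_Iio,
      Measure.restrict_apply measurableSet_Iio]
    have hIc : Set.Iio c ∩ Set.Icc (0 : ℝ) 1 = Set.Ico 0 c := by
      ext y
      simp only [Set.mem_inter_iff, Set.mem_Iio, Set.mem_Icc, Set.mem_Ico]
      constructor
      · rintro ⟨h1, h2, h3⟩; exact ⟨h2, h1⟩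
      · rintro ⟨h1, h2⟩; exact ⟨h2, h1, by linarith⟩
    rw [hIc, Real.volume_Ico, sub_zero]
  have hXmem : ∀ l : Fin n, MemLp (X l) 2 μ := fun l =>
    memLp_indicator_const 2 (hCyl l) 1 (Or.inr (measure_ne_top μ _))
  have hXint : ∀ l : Fin n, ∫ t, X l t ∂μ = c := by
    intro l
    rw [hXdef]
    rw [integral_indicator_const (1 : ℝ) (hCyl l), measureReal_def, hmeasCyl l, smul_eq_mul, mul_one,
      ENNReal.toReal_ofReal hc0]
  have hXvar : ∀ l : Fin n, ProbabilityTheory.variance (X l) μ = c - c ^ 2 := by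
    intro l
    rw [ProbabilityTheory.variance_eq_sub (hXmem l)]
    have hsq : (X l) ^ 2 = X l := by
      funext t
      simp only [Pi.pow_apply, hXdef, Set.indicator_apply]
      split_ifs <;> norm_num
    rw [hsq, hXint l]
  -- pairwise independence
  have hIndep : Set.Pairwise ↑Shat fun a b => ProbabilityTheory.IndepFun (X a) (X b) μ := by
    intro a _ b _ hab
    have h1 : ProbabilityTheory.IndepFun (Function.eval a) (Function.eval b) μ :=
      uniform_indepFun_eval n hab
    have hφ : Measurable ((Set.Iio c).indicator fun _ : ℝ => (1 : ℝ)) :=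
      measurable_const.indicator measurableSet_Iio
    have h2 := h1.comp hφ hφ
    have ha' : X a = ((Set.Iio c).indicator fun _ : ℝ => (1 : ℝ)) ∘ Function.eval a := by
      funext t
      simp [hXdef, Set.indicator_apply, Function.eval]
    have hb' : X b = ((Set.Iio c).indicator fun _ : ℝ => (1 : ℝ)) ∘ Function.eval b := by
      funext t
      simp [hXdef, Set.indicator_apply, Function.eval]
    rw [ha', hb']
    exact h2
  have hgmem : MemLp g 2 μ := memLp_finset_sum' _ fun l _ => hXmem l
  have hVar : ProbabilityTheory.variance g μ = (Shat.card : ℝ) * (c - c ^ 2) := by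
    rw [hgdef, ProbabilityTheory.IndepFun.variance_sum (fun l _ => hXmem l) hIndep]
    rw [Finset.sum_congr rfl fun l _ => hXvar l, Finset.sum_const, nsmul_eq_mul]
  have hgint : ∫ t, g t ∂μ = (Shat.card : ℝ) * c := by
    rw [hgdef]
    have h1 : ∀ t, (∑ l ∈ Shat, X l) t = ∑ l ∈ Shat, X l t := fun t => Finset.sum_apply t Shat X
    simp_rw [h1]
    rw [integral_finset_sum _ fun l _ => (hXmem l).integrable one_le_two]
    rw [Finset.sum_congr rfl fun l _ => hXint l, Finset.sum_const, nsmul_eq_mul]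
  have hgt : ∀ t : Fin n → ℝ, g t = ((Shat.filter fun l => t l < c).card : ℝ) := by
    intro t
    rw [hgdef]
    rw [Finset.sum_apply t Shat X]
    have h1 : ∀ l : Fin n, X l t = if t l < c then (1 : ℝ) else 0 := by
      intro l
      simp [hXdef, Set.indicator_apply, Function.eval]
    rw [Finset.sum_congr rfl fun l _ => h1 l, Finset.sum_boole]
  -- the two bad events
  set A : Set (Fin n → ℝ) := Function.eval i₀ ⁻¹' Set.Ici (1 - δ) with hAdef
  set B : Set (Fin n → ℝ) := {t | (k : ℝ) - 1 - x < g t} with hBdef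
  have hAmeas : MeasurableSet A := (measurable_pi_apply i₀) measurableSet_Ici
  have hgmeas : Measurable g := by
    have h := Finset.measurable_sum (f := X) Shat fun l _ =>
      (measurable_const.indicator (hCyl l) : Measurable (X l))
    have heq : g = fun a => ∑ l ∈ Shat, X l a := by
      funext a; rw [hgdef]; exact Finset.sum_apply a Shat X
    rw [heq]; exact h
  have hBmeas : MeasurableSet B := hgmeas measurableSet_Ioi
  have hμA : μ A ≤ ENNReal.ofReal δ := by
    rw [hμdef, hAdef, uniform_eval_preimage n i₀ measurableSet_Ici,
      Measure.restrict_apply measurableSet_Ici]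
    have hsub1 : Set.Ici (1 - δ) ∩ Set.Icc (0 : ℝ) 1 ⊆ Set.Icc (1 - δ) 1 := by
      intro y hy
      exact Set.mem_Icc.2 ⟨hy.1, hy.2.2⟩
    refine le_trans (measure_mono hsub1) ?_
    rw [Real.volume_Icc]
    exact ENNReal.ofReal_le_ofReal (by linarith)
  have hμB : μ B ≤ ENNReal.ofReal (x / k) := by
    refine le_trans (measure_mono ?_)
      (le_trans (ProbabilityTheory.meas_ge_le_variance_div_sq hgmem hx1pos) ?_)
    · intro t ht
      have ht' : (k : ℝ) - 1 - x < g t := ht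
      simp only [Set.mem_setOf_eq]
      have hint : (∫ s, g s ∂μ) ≤ (k : ℝ) * c := by
        rw [hgint]
        exact mul_le_mul_of_nonneg_right hscast hc0
      have h2 : x - 1 ≤ g t - ∫ s, g s ∂μ := by linarith
      exact le_trans h2 (le_abs_self _)
    · apply ENNReal.ofReal_le_ofReal
      rw [div_le_div_iff₀ (by positivity) hk0]
      have hvb : ProbabilityTheory.variance g μ ≤ 2 * x := by
        rw [hVar]; exact hA2
      exact le_trans (mul_le_mul_of_nonneg_right hvb hk0.le) hA3
  -- event inclusion
  have hsub : (A ∪ B)ᶜ ⊆ {t : Fin n → ℝ | ∃ i ∈ M, (∀ j ∈ M, t i ≤ t j) ∧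
      x ≤ (k : ℝ) - ((Shat.filter fun l => t l < t i).card : ℝ) - 1} := by
    intro t ht
    rw [Set.mem_compl_iff, Set.mem_union] at ht
    push_neg at ht
    obtain ⟨hA, hB⟩ := ht
    obtain ⟨i, hiM, hmin⟩ := M.exists_min_image t ⟨i₀, hi₀⟩
    refine ⟨i, hiM, hmin, ?_⟩
    have hti0 : t i₀ < 1 - δ := by
      by_contra hcon
      exact hA (Set.mem_Ici.2 (le_of_not_gt hcon))
    have hti : t i < c := lt_of_le_of_lt (hmin i₀ hi₀) (by rw [hcdef]; exact hti0)
    have hsub2 : (Shat.filter fun l => t l < t i) ⊆ Shat.filter fun l => t l < c := by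
      intro l hl
      rw [Finset.mem_filter] at hl ⊢
      exact ⟨hl.1, lt_trans hl.2 hti⟩
    have hcard : ((Shat.filter fun l => t l < t i).card : ℝ) ≤
        ((Shat.filter fun l => t l < c).card : ℝ) := by
      exact_mod_cast Finset.card_le_card hsub2
    have hB' : g t ≤ (k : ℝ) - 1 - x := le_of_not_gt hB
    rw [hgt t] at hB'
    linarith
  -- assembling
  have hμAB : μ (A ∪ B) ≤ ENNReal.ofReal (3 * L / R) := by
    refine le_trans (measure_union_le A B) ?_
    refine le_trans (add_le_add hμA hμB) ?_
    rw [← ENNReal.ofReal_add (le_of_lt hδ0) (by positivity)]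
    apply ENNReal.ofReal_le_ofReal
    refine le_of_eq ?_
    rw [hδdef, hxdef, ← hR2]
    field_simp
    ring
  calc ENNReal.ofReal (1 - 3 * L / R)
      = 1 - ENNReal.ofReal (3 * L / R) := by
        rw [ENNReal.ofReal_sub _ (by positivity), ENNReal.ofReal_one]
    _ ≤ 1 - μ (A ∪ B) := tsub_le_tsub_left hμAB 1
    _ = μ ((A ∪ B)ᶜ) := (prob_compl_eq_one_sub (hAmeas.union hBmeas)).symm
    _ ≤ _ := measure_mono hsub
end

section
/- Let N be a finite set, k a positive integer, and v̂ : N → ℝ_{≥0}. Let Ŝ ⊆ N with |Ŝ| = k consist of k largest predicted values, i.e., v̂(i) ≥ v̂(j) for every i ∈ Ŝ and j ∈ N∖Ŝ. Then for every M ⊆ N and every S* ⊆ N with |S*| ≤ k and S*∖M ≠ ∅, it holds that Σ_{i∈Ŝ∖M} v̂(i) ≥ min{1, |Ŝ∖M| / |S*∖M|} · Σ_{i∈S*∖M} v̂(i). -/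
/-- If `Ŝ` consists of `k` largest predicted values, then for every `M ⊆ N` and
every `S* ⊆ N` with `|S*| ≤ k` and `S* \ M ≠ ∅`,
`v̂(Ŝ \ M) ≥ min{1, |Ŝ \ M| / |S* \ M|} · v̂(S* \ M)`. -/
theorem top_k_pred_sum_lower {α : Type*} [DecidableEq α] (N : Finset α) (k : ℕ) (hk : 0 < k)
    (vhat : α → ℝ) (hvhat : ∀ i ∈ N, 0 ≤ vhat i)
    (Shat : Finset α) (hSsub : Shat ⊆ N) (hScard : Shat.card = k)
    (htop : ∀ i ∈ Shat, ∀ j ∈ N \ Shat, vhat j ≤ vhat i)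
    (M : Finset α) (hM : M ⊆ N)
    (Sstar : Finset α) (hstarsub : Sstar ⊆ N) (hstarcard : Sstar.card ≤ k)
    (hne : (Sstar \ M).Nonempty) :
    min 1 (((Shat \ M).card : ℝ) / ((Sstar \ M).card : ℝ)) * ∑ i ∈ Sstar \ M, vhat i ≤
      ∑ i ∈ Shat \ M, vhat i := by
  set A := Shat \ M with hA
  set B := Sstar \ M with hB
  have hbpos : 0 < (B.card : ℝ) := by
    exact_mod_cast Finset.card_pos.mpr hne
  have hBsum : (0:ℝ) ≤ ∑ i ∈ B, vhat i :=
    Finset.sum_nonneg fun i hi => hvhat i (hstarsub (Finset.mem_sdiff.mp hi).1)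
  have hAsum : (0:ℝ) ≤ ∑ i ∈ A, vhat i :=
    Finset.sum_nonneg fun i hi => hvhat i (hSsub (Finset.mem_sdiff.mp hi).1)
  rcases A.eq_empty_or_nonempty with hAe | hAne
  · rw [hAe]
    simp only [Finset.card_empty, Nat.cast_zero, Finset.sum_empty, zero_div]
    have : min (1:ℝ) 0 = 0 := by norm_num
    rw [this, zero_mul]
  · -- pick minimum element of A
    obtain ⟨i0, hi0A, hi0min⟩ := A.exists_min_image vhat hAne
    have hi0S : i0 ∈ Shat := (Finset.mem_sdiff.mp hi0A).1
    have hm0 : 0 ≤ vhat i0 := hvhat i0 (hSsub hi0S)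
    -- elements of B \ A are dominated
    have hdom : ∀ j ∈ B \ A, vhat j ≤ vhat i0 := by
      intro j hj
      rcases Finset.mem_sdiff.mp hj with ⟨hjB, hjnA⟩
      rcases Finset.mem_sdiff.mp hjB with ⟨hjS, hjnM⟩
      have hjnShat : j ∉ Shat := fun h => hjnA (Finset.mem_sdiff.mpr ⟨h, hjnM⟩)
      exact htop i0 hi0S j (Finset.mem_sdiff.mpr ⟨hstarsub hjS, hjnShat⟩)
    have h1 : ∑ j ∈ B \ A, vhat j ≤ ((B \ A).card : ℝ) * vhat i0 := by
      have := Finset.sum_le_card_nsmul (B \ A) vhat (vhat i0) hdom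
      simpa [nsmul_eq_mul] using this
    have h2 : ((A \ B).card : ℝ) * vhat i0 ≤ ∑ j ∈ A \ B, vhat j := by
      have := Finset.card_nsmul_le_sum (A \ B) vhat (vhat i0)
        (fun j hj => hi0min j (Finset.mem_sdiff.mp hj).1)
      simpa [nsmul_eq_mul] using this
    have h3 : ((A.card : ℝ)) * vhat i0 ≤ ∑ j ∈ A, vhat j := by
      have := Finset.card_nsmul_le_sum A vhat (vhat i0) (fun j hj => hi0min j hj)
      simpa [nsmul_eq_mul] using this
    have hBsplit : ∑ i ∈ B ∩ A, vhat i + ∑ i ∈ B \ A, vhat i = ∑ i ∈ B, vhat i :=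
      Finset.sum_inter_add_sum_sdiff B A vhat
    have hAsplit : ∑ i ∈ A ∩ B, vhat i + ∑ i ∈ A \ B, vhat i = ∑ i ∈ A, vhat i :=
      Finset.sum_inter_add_sum_sdiff A B vhat
    have hint : A ∩ B = B ∩ A := Finset.inter_comm A B
    have hBcard : (B ∩ A).card + (B \ A).card = B.card :=
      Finset.card_inter_add_card_sdiff B A
    have hAcard : (A ∩ B).card + (A \ B).card = A.card :=
      Finset.card_inter_add_card_sdiff A B
    have hBcardR : ((B ∩ A).card : ℝ) + ((B \ A).card : ℝ) = (B.card : ℝ) := by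
      exact_mod_cast hBcard
    have hAcardR : ((A ∩ B).card : ℝ) + ((A \ B).card : ℝ) = (A.card : ℝ) := by
      exact_mod_cast hAcard
    rw [hint] at hAsplit hAcardR
    -- key: v(B) ≤ v(A) + (|B| - |A|) * m
    have hkey : ∑ i ∈ B, vhat i ≤ ∑ i ∈ A, vhat i + ((B.card : ℝ) - A.card) * vhat i0 := by
      nlinarith [h1, h2, hBsplit, hAsplit]
    rcases le_or_gt (B.card : ℝ) (A.card : ℝ) with hle | hlt
    · have hmin : min (1:ℝ) ((A.card : ℝ) / (B.card : ℝ)) = 1 :=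
        min_eq_left ((one_le_div hbpos).mpr hle)
      rw [hmin, one_mul]
      nlinarith [hkey, hm0, hle]
    · have hmin : min (1:ℝ) ((A.card : ℝ) / (B.card : ℝ)) = (A.card : ℝ) / (B.card : ℝ) :=
        min_eq_right (by rw [div_le_one hbpos]; linarith)
      rw [hmin, div_mul_eq_mul_div, div_le_iff₀ hbpos]
      nlinarith [hkey, h3, hm0, hlt, hAsum]
end

section
/- Let N be a finite set, k a positive integer, v, v̂ : N → ℝ_{≥0}, θ ∈ [0,1], and M ⊆ N with |M| ≤ √k · ln k, such that (1−θ)v(i) ≤ v̂(i) ≤ (1+θ)v(i) for all i ∈ N∖M. Let Ŝ ⊆ N with |Ŝ| = k consist of k largest predicted values, i.e., v̂(i) ≥ v̂(j) for every i ∈ Ŝ and j ∈ N∖Ŝ. Then for every S* ⊆ N with |S*| ≤ k, Σ_{i∈Ŝ∖M} v(i) ≥ (1 − 2θ − ln k/√k) · Σ_{i∈S*∖M} v(i). -/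
private lemma tkpal_apos {K x m L θ : ℝ} (hK : 0 < K) (h5 : K ≤ x + m) (h6 : m ≤ K * L)
    (hθ0 : 0 ≤ θ) (hc : 0 < 1 - 2 * θ - L) : 0 < x := by
  nlinarith [mul_pos hK (show (0:ℝ) < 1 - L by nlinarith)]

private lemma tkpal_arith {θ L a m K vA vB uA uB m0 : ℝ}
    (hθ0 : 0 ≤ θ) (hL0 : 0 ≤ L) (hc : 0 < 1 - 2 * θ - L)
    (hm : 0 ≤ m) (ha0 : 0 < a)
    (h5 : K ≤ a + m) (h6 : m ≤ K * L)
    (h1 : (1 - θ) * vB ≤ uB) (h2 : uA ≤ (1 + θ) * vA) (h3 : uB ≤ uA + m * m0)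
    (h4 : a * m0 ≤ uA) (hm00 : 0 ≤ m0) (hvA0 : 0 ≤ vA) :
    (1 - 2 * θ - L) * vB ≤ vA := by
  have hθhalf : 2 * θ < 1 := by linarith
  have key1 : (1 - 2*θ - L) * (1 + θ) ≤ (1 - θ) * (1 - L) := by
    nlinarith [mul_nonneg hθ0 hL0, sq_nonneg θ]
  have key2 : (1 - L) * (a + m) ≤ a := by
    nlinarith [mul_le_mul_of_nonneg_left h5 hL0]
  have main : a * (1 - θ) * vB ≤ (a + m) * (1 + θ) * vA := by
    have s1 : a * ((1 - θ) * vB) ≤ a * uB :=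
      mul_le_mul_of_nonneg_left h1 (le_of_lt ha0)
    have s2 : a * uB ≤ a * (uA + m * m0) :=
      mul_le_mul_of_nonneg_left h3 (le_of_lt ha0)
    have s3 : m * (a * m0) ≤ m * uA :=
      mul_le_mul_of_nonneg_left h4 hm
    have s4 : (a + m) * uA ≤ (a + m) * ((1 + θ) * vA) :=
      mul_le_mul_of_nonneg_left h2 (by linarith)
    nlinarith
  have t1 : (1 - 2*θ - L) * (a * (1 - θ) * vB) ≤
      (1 - 2*θ - L) * ((a + m) * (1 + θ) * vA) :=
    mul_le_mul_of_nonneg_left main (le_of_lt hc)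
  have t2 : (1 - 2*θ - L) * ((a + m) * (1 + θ)) ≤ (1 - θ) * a := by
    calc (1 - 2*θ - L) * ((a + m) * (1 + θ))
        = ((1 - 2*θ - L) * (1 + θ)) * (a + m) := by ring
      _ ≤ ((1 - θ) * (1 - L)) * (a + m) := by
          apply mul_le_mul_of_nonneg_right key1; linarith
      _ = (1 - θ) * ((1 - L) * (a + m)) := by ring
      _ ≤ (1 - θ) * a := by
          apply mul_le_mul_of_nonneg_left key2; linarith
  have t3 : (1 - 2*θ - L) * ((a + m) * (1 + θ)) * vA ≤ (1 - θ) * a * vA :=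
    mul_le_mul_of_nonneg_right t2 hvA0
  have hfinal : a * (1 - θ) * ((1 - 2*θ - L) * vB) ≤ a * (1 - θ) * vA := by
    nlinarith
  have hpos : 0 < a * (1 - θ) := by nlinarith
  exact le_of_mul_le_mul_left hfinal hpos

/-- If `|M| ≤ √k ln k` and all predictions outside `M` have multiplicative error
at most `θ ∈ [0,1]`, and `Ŝ` consists of `k` largest predicted values, then
`v(Ŝ \ M) ≥ (1 - 2θ - ln k/√k) · v(S* \ M)` for every `S* ⊆ N` with `|S*| ≤ k`. -/
theorem top_k_pred_actual_lower {α : Type*} [DecidableEq α] (N : Finset α) (k : ℕ) (hk : 0 < k)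
    (v vhat : α → ℝ) (hv : ∀ i ∈ N, 0 ≤ v i) (hvhat : ∀ i ∈ N, 0 ≤ vhat i)
    (θ : ℝ) (hθ0 : 0 ≤ θ) (hθ1 : θ ≤ 1)
    (M : Finset α) (hMsub : M ⊆ N) (hMcard : (M.card : ℝ) ≤ Real.sqrt k * Real.log k)
    (herr : ∀ i ∈ N \ M, (1 - θ) * v i ≤ vhat i ∧ vhat i ≤ (1 + θ) * v i)
    (Shat : Finset α) (hSsub : Shat ⊆ N) (hScard : Shat.card = k)
    (htop : ∀ i ∈ Shat, ∀ j ∈ N \ Shat, vhat j ≤ vhat i)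
    (Sstar : Finset α) (hstarsub : Sstar ⊆ N) (hstarcard : Sstar.card ≤ k) :
    (1 - 2 * θ - Real.log k / Real.sqrt k) * ∑ i ∈ Sstar \ M, v i ≤
      ∑ i ∈ Shat \ M, v i := by
  have hBsubN : Sstar \ M ⊆ N \ M := Finset.sdiff_subset_sdiff hstarsub (le_refl _)
  have hAsubN : Shat \ M ⊆ N \ M := Finset.sdiff_subset_sdiff hSsub (le_refl _)
  have hBN : ∀ i ∈ Sstar \ M, i ∈ N := fun i hi => (Finset.mem_sdiff.1 (hBsubN hi)).1
  have hAN : ∀ i ∈ Shat \ M, i ∈ N := fun i hi => (Finset.mem_sdiff.1 (hAsubN hi)).1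
  have hvB0 : 0 ≤ ∑ i ∈ Sstar \ M, v i := Finset.sum_nonneg fun i hi => hv i (hBN i hi)
  have hvA0 : 0 ≤ ∑ i ∈ Shat \ M, v i := Finset.sum_nonneg fun i hi => hv i (hAN i hi)
  have hk1 : (1:ℝ) ≤ (k:ℝ) := by exact_mod_cast hk
  have hL0 : 0 ≤ Real.log k / Real.sqrt k :=
    div_nonneg (Real.log_nonneg hk1) (Real.sqrt_nonneg _)
  by_cases hc : 1 - 2 * θ - Real.log k / Real.sqrt k ≤ 0
  · calc (1 - 2 * θ - Real.log k / Real.sqrt k) * ∑ i ∈ Sstar \ M, v i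
        ≤ 0 := mul_nonpos_iff.2 (Or.inr ⟨hc, hvB0⟩)
      _ ≤ ∑ i ∈ Shat \ M, v i := hvA0
  push_neg at hc
  have hkpos : (0:ℝ) < k := by linarith
  have hsqpos : 0 < Real.sqrt k := Real.sqrt_pos.2 hkpos
  have hss : Real.sqrt (k:ℝ) * Real.sqrt (k:ℝ) = (k:ℝ) := Real.mul_self_sqrt (le_of_lt hkpos)
  have h6 : (M.card : ℝ) ≤ (k:ℝ) * (Real.log k / Real.sqrt k) := by
    have : (k:ℝ) * (Real.log k / Real.sqrt k) = Real.sqrt k * Real.log k := by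
      field_simp
      nlinarith [hss]
    rw [this]; exact hMcard
  -- counting
  have hShat_sub : Shat ⊆ (Shat \ M) ∪ M := by
    intro x hx
    by_cases hxM : x ∈ M
    · exact Finset.mem_union_right _ hxM
    · exact Finset.mem_union_left _ (Finset.mem_sdiff.2 ⟨hx, hxM⟩)
  have hk_le : k ≤ (Shat \ M).card + M.card := by
    calc k = Shat.card := hScard.symm
      _ ≤ ((Shat \ M) ∪ M).card := Finset.card_le_card hShat_sub
      _ ≤ (Shat \ M).card + M.card := Finset.card_union_le _ _
  have hB_le : (Sstar \ M).card ≤ k :=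
    le_trans (Finset.card_le_card Finset.sdiff_subset) hstarcard
  have hEq : (Sstar \ M) ∩ Shat = (Shat \ M) ∩ (Sstar \ M) := by
    ext x
    simp only [Finset.mem_inter, Finset.mem_sdiff]
    tauto
  have hc1 : ((Sstar \ M) \ Shat).card + ((Sstar \ M) ∩ Shat).card = (Sstar \ M).card :=
    Finset.card_sdiff_add_card_inter _ _
  have hc2 : ((Shat \ M) \ (Sstar \ M)).card + ((Shat \ M) ∩ (Sstar \ M)).card
      = (Shat \ M).card := Finset.card_sdiff_add_card_inter _ _
  have hEqcard : ((Sstar \ M) ∩ Shat).card = ((Shat \ M) ∩ (Sstar \ M)).card := by rw [hEq]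
  have ht : ((Sstar \ M) \ Shat).card ≤ ((Shat \ M) \ (Sstar \ M)).card + M.card := by omega
  -- A nonempty
  have hk_leR : (k:ℝ) ≤ ((Shat \ M).card : ℝ) + (M.card : ℝ) := by exact_mod_cast hk_le
  have hAposR : (0:ℝ) < ((Shat \ M).card : ℝ) := tkpal_apos hkpos hk_leR h6 hθ0 hc
  have hApos : 0 < (Shat \ M).card := by exact_mod_cast hAposR
  have hAne : (Shat \ M).Nonempty := Finset.card_pos.1 hApos
  obtain ⟨i₀, hi₀A, hi₀min⟩ := (Shat \ M).exists_min_image vhat hAne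
  have hi₀Shat : i₀ ∈ Shat := (Finset.mem_sdiff.1 hi₀A).1
  have hm₀0 : 0 ≤ vhat i₀ := hvhat i₀ (hAN i₀ hi₀A)
  -- sum bounds
  have h1 : (1 - θ) * ∑ i ∈ Sstar \ M, v i ≤ ∑ i ∈ Sstar \ M, vhat i := by
    rw [Finset.mul_sum]
    exact Finset.sum_le_sum fun i hi => (herr i (hBsubN hi)).1
  have h2 : ∑ i ∈ Shat \ M, vhat i ≤ (1 + θ) * ∑ i ∈ Shat \ M, v i := by
    rw [Finset.mul_sum]
    exact Finset.sum_le_sum fun i hi => (herr i (hAsubN hi)).2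
  have h4 : ((Shat \ M).card : ℝ) * vhat i₀ ≤ ∑ i ∈ Shat \ M, vhat i := by
    have := Finset.card_nsmul_le_sum (Shat \ M) vhat (vhat i₀) hi₀min
    simpa [nsmul_eq_mul] using this
  have hY : ∑ j ∈ (Sstar \ M) \ Shat, vhat j ≤ (((Sstar \ M) \ Shat).card : ℝ) * vhat i₀ := by
    have hb : ∀ j ∈ (Sstar \ M) \ Shat, vhat j ≤ vhat i₀ := by
      intro j hj
      rcases Finset.mem_sdiff.1 hj with ⟨hjB, hjS⟩
      exact htop i₀ hi₀Shat j (Finset.mem_sdiff.2 ⟨hBN j hjB, hjS⟩)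
    have := Finset.sum_le_card_nsmul ((Sstar \ M) \ Shat) vhat (vhat i₀) hb
    simpa [nsmul_eq_mul] using this
  have hZ : (((Shat \ M) \ (Sstar \ M)).card : ℝ) * vhat i₀ ≤
      ∑ j ∈ (Shat \ M) \ (Sstar \ M), vhat j := by
    have hb : ∀ j ∈ (Shat \ M) \ (Sstar \ M), vhat i₀ ≤ vhat j := fun j hj =>
      hi₀min j (Finset.mem_sdiff.1 hj).1
    have := Finset.card_nsmul_le_sum ((Shat \ M) \ (Sstar \ M)) vhat (vhat i₀) hb
    simpa [nsmul_eq_mul] using this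
  have hsplitB : ∑ i ∈ (Sstar \ M) ∩ Shat, vhat i + ∑ i ∈ (Sstar \ M) \ Shat, vhat i
      = ∑ i ∈ Sstar \ M, vhat i := Finset.sum_inter_add_sum_sdiff _ _ _
  have hsplitA : ∑ i ∈ (Shat \ M) ∩ (Sstar \ M), vhat i
      + ∑ i ∈ (Shat \ M) \ (Sstar \ M), vhat i
      = ∑ i ∈ Shat \ M, vhat i := Finset.sum_inter_add_sum_sdiff _ _ _
  have hEqsum : ∑ i ∈ (Sstar \ M) ∩ Shat, vhat i
      = ∑ i ∈ (Shat \ M) ∩ (Sstar \ M), vhat i := by rw [hEq]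
  have htR : (((Sstar \ M) \ Shat).card : ℝ) ≤
      (((Shat \ M) \ (Sstar \ M)).card : ℝ) + (M.card : ℝ) := by exact_mod_cast ht
  have h3 : ∑ i ∈ Sstar \ M, vhat i ≤
      ∑ i ∈ Shat \ M, vhat i + (M.card : ℝ) * vhat i₀ := by
    have hmul := mul_le_mul_of_nonneg_right htR hm₀0
    linarith
  exact tkpal_arith hθ0 hL0 hc (by positivity) hAposR hk_leR h6 h1 h2 h3 h4 hm₀0 hvA0
end

section
/- Let N be a finite set, k a positive integer, v : N → ℝ_{>0}, v̂ : N → ℝ_{≥0}, and ε ∈ [0,1]. Let Ŝ ⊆ N with |Ŝ| = k consist of k largest predicted values, i.e., v̂(i) ≥ v̂(j) for every i ∈ Ŝ and j ∈ N∖Ŝ, and let î_min ∈ argmin_{i∈Ŝ} v̂(i). Assume |v̂(i)/v(i) − 1| ≤ ε for every i ∈ Ŝ and v̂(î_min) ≥ (1−ε)v(i) for every i ∈ N∖Ŝ. Then for every S* ⊆ N with |S*| ≤ k, Σ_{i∈Ŝ} v(i) ≥ ((1−ε)/(1+ε)) Σ_{i∈S*} v(i) ≥ (1−2ε) Σ_{i∈S*}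 v(i). -/
/-- With the alternative error definition: if `|v̂(i)/v(i) - 1| ≤ ε` for all
`i ∈ Ŝ` and `v̂(î_min) ≥ (1-ε) v(i)` for all `i ∈ N \ Ŝ`, where `Ŝ` consists of `k` largest
predicted values and `î_min` minimizes `v̂` over `Ŝ`, then
`v(Ŝ) ≥ ((1-ε)/(1+ε)) v(S*) ≥ (1-2ε) v(S*)` for every `S* ⊆ N` with `|S*| ≤ k`. -/
theorem top_k_predictions_competitive_alt_error {α : Type*} [DecidableEq α]
    (N : Finset α) (k : ℕ) (hk : 0 < k)
    (v vhat : α → ℝ) (hv : ∀ i ∈ N, 0 < v i) (hvhat : ∀ i ∈ N, 0 ≤ vhat i)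
    (ε : ℝ) (hε0 : 0 ≤ ε) (hε1 : ε ≤ 1)
    (Shat : Finset α) (hSsub : Shat ⊆ N) (hScard : Shat.card = k)
    (htop : ∀ i ∈ Shat, ∀ j ∈ N \ Shat, vhat j ≤ vhat i)
    (imin : α) (himin : imin ∈ Shat) (hminval : ∀ i ∈ Shat, vhat imin ≤ vhat i)
    (herrS : ∀ i ∈ Shat, |vhat i / v i - 1| ≤ ε)
    (herrout : ∀ i ∈ N \ Shat, (1 - ε) * v i ≤ vhat imin)
    (Sstar : Finset α) (hstarsub : Sstar ⊆ N) (hstarcard : Sstar.card ≤ k) :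
    ((1 - ε) / (1 + ε)) * ∑ i ∈ Sstar, v i ≤ ∑ i ∈ Shat, v i ∧
      (1 - 2 * ε) * ∑ i ∈ Sstar, v i ≤ ((1 - ε) / (1 + ε)) * ∑ i ∈ Sstar, v i := by
  have h1ε : (0:ℝ) < 1 + ε := by linarith
  have hub : ∀ i ∈ Shat, vhat i ≤ (1 + ε) * v i := by
    intro i hi
    have hvi := hv i (hSsub hi)
    have h := (abs_le.mp (herrS i hi)).2
    rw [div_sub' (ne_of_gt hvi), div_le_iff₀ hvi] at h
    nlinarith
  have hstarpos : (0:ℝ) ≤ ∑ i ∈ Sstar, v i :=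
    Finset.sum_nonneg fun i hi => (hv i (hstarsub hi)).le
  -- cardinality inequality
  have hcard : (Sstar \ Shat).card ≤ (Shat \ Sstar).card := by
    have h1 := Finset.card_sdiff_add_card_inter Sstar Shat
    have h2 := Finset.card_sdiff_add_card_inter Shat Sstar
    rw [Finset.inter_comm] at h2
    omega
  have hA : (1 - ε) * ∑ j ∈ Sstar \ Shat, v j ≤ ((Sstar \ Shat).card : ℝ) * vhat imin := by
    rw [Finset.mul_sum]
    calc ∑ j ∈ Sstar \ Shat, (1 - ε) * v j
        ≤ ∑ _j ∈ Sstar \ Shat, vhat imin := by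
          refine Finset.sum_le_sum fun j hj => herrout j ?_
          rw [Finset.mem_sdiff] at hj ⊢
          exact ⟨hstarsub hj.1, hj.2⟩
      _ = ((Sstar \ Shat).card : ℝ) * vhat imin := by
          rw [Finset.sum_const, nsmul_eq_mul]
  have himin0 : 0 ≤ vhat imin := hvhat imin (hSsub himin)
  have hB : ((Shat \ Sstar).card : ℝ) * vhat imin ≤ ∑ i ∈ Shat \ Sstar, vhat i := by
    calc ((Shat \ Sstar).card : ℝ) * vhat imin
        = ∑ _i ∈ Shat \ Sstar, vhat imin := by rw [Finset.sum_const, nsmul_eq_mul]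
      _ ≤ ∑ i ∈ Shat \ Sstar, vhat i :=
          Finset.sum_le_sum fun i hi => hminval i (Finset.mem_sdiff.mp hi).1
  have hC : ∑ i ∈ Shat \ Sstar, vhat i ≤ (1 + ε) * ∑ i ∈ Shat \ Sstar, v i := by
    rw [Finset.mul_sum]
    exact Finset.sum_le_sum fun i hi => hub i (Finset.mem_sdiff.mp hi).1
  have hcardR : ((Sstar \ Shat).card : ℝ) * vhat imin ≤ ((Shat \ Sstar).card : ℝ) * vhat imin := by
    apply mul_le_mul_of_nonneg_right _ himin0
    exact_mod_cast hcard
  -- sum over intersection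
  have hint : (1 - ε) * ∑ i ∈ Sstar ∩ Shat, v i ≤ (1 + ε) * ∑ i ∈ Shat ∩ Sstar, v i := by
    rw [Finset.inter_comm]
    apply mul_le_mul_of_nonneg_right (by linarith)
    exact Finset.sum_nonneg fun i hi =>
      (hv i (hSsub (Finset.mem_inter.mp hi).1)).le
  have hsplit1 : ∑ i ∈ Sstar, v i
      = ∑ i ∈ Sstar ∩ Shat, v i + ∑ i ∈ Sstar \ Shat, v i :=
    (Finset.sum_inter_add_sum_sdiff Sstar Shat v).symm
  have hsplit2 : ∑ i ∈ Shat, v i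
      = ∑ i ∈ Shat ∩ Sstar, v i + ∑ i ∈ Shat \ Sstar, v i :=
    (Finset.sum_inter_add_sum_sdiff Shat Sstar v).symm
  have hmain : (1 - ε) * ∑ i ∈ Sstar, v i ≤ (1 + ε) * ∑ i ∈ Shat, v i := by
    rw [hsplit1, hsplit2]
    nlinarith [hA, hB, hC, hcardR, hint]
  constructor
  · rw [div_mul_eq_mul_div, div_le_iff₀ h1ε]
    nlinarith
  · rw [div_mul_eq_mul_div, le_div_iff₀ h1ε]
    nlinarith [mul_nonneg (mul_nonneg hε0 hε0) hstarpos]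
end

section
/- Let N be a finite set, k a positive integer, v : N → ℝ_{>0}, v̂ : N → ℝ_{≥0}, θ ∈ [0,1], and M ⊆ N with |M| ≤ √k · ln k. Let Ŝ ⊆ N with |Ŝ| = k consist of k largest predicted values, i.e., v̂(i) ≥ v̂(j) for every i ∈ Ŝ and j ∈ N∖Ŝ, and let î_min ∈ argmin_{i∈Ŝ} v̂(i). Assume (1−θ)v(i) ≤ v̂(i) ≤ (1+θ)v(i) for every i ∈ Ŝ∖M and v̂(î_min) ≥ (1−θ)v(i) for every i ∈ (N∖Ŝ)∖M. Then for every S* ⊆ N with |S*| ≤ k, Σ_{i∈Ŝ∖M} v(i) ≥ (1 − 2θ − ln k/√k) · Σ_{i∈S*∖M} v(i). -/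
/-- With the alternative error definition: if `|M| ≤ √k ln k`,
`(1-θ)v(i) ≤ v̂(i) ≤ (1+θ)v(i)` for all `i ∈ Ŝ \ M`, and `v̂(î_min) ≥ (1-θ)v(i)` for all
`i ∈ (N \ Ŝ) \ M`, where `Ŝ` consists of `k` largest predicted values and `î_min` minimizes
`v̂` over `Ŝ`, then `v(Ŝ \ M) ≥ (1 - 2θ - ln k/√k) · v(S* \ M)` for every `S* ⊆ N` with
`|S*| ≤ k`. -/
theorem top_k_pred_actual_lower_alt_error {α : Type*} [DecidableEq α]
    (N : Finset α) (k : ℕ) (hk : 0 < k)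
    (v vhat : α → ℝ) (hv : ∀ i ∈ N, 0 < v i) (hvhat : ∀ i ∈ N, 0 ≤ vhat i)
    (θ : ℝ) (hθ0 : 0 ≤ θ) (hθ1 : θ ≤ 1)
    (M : Finset α) (hMsub : M ⊆ N) (hMcard : (M.card : ℝ) ≤ Real.sqrt k * Real.log k)
    (Shat : Finset α) (hSsub : Shat ⊆ N) (hScard : Shat.card = k)
    (htop : ∀ i ∈ Shat, ∀ j ∈ N \ Shat, vhat j ≤ vhat i)
    (imin : α) (himin : imin ∈ Shat) (hminval : ∀ i ∈ Shat, vhat imin ≤ vhat i)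
    (herrS : ∀ i ∈ Shat \ M, (1 - θ) * v i ≤ vhat i ∧ vhat i ≤ (1 + θ) * v i)
    (herrout : ∀ i ∈ (N \ Shat) \ M, (1 - θ) * v i ≤ vhat imin)
    (Sstar : Finset α) (hstarsub : Sstar ⊆ N) (hstarcard : Sstar.card ≤ k) :
    (1 - 2 * θ - Real.log k / Real.sqrt k) * ∑ i ∈ Sstar \ M, v i ≤
      ∑ i ∈ Shat \ M, v i := by
  classical
  set L : ℝ := Real.log k / Real.sqrt k with hLdef
  have hT0 : (0:ℝ) ≤ ∑ i ∈ Shat \ M, v i :=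
    Finset.sum_nonneg fun i hi => (hv i (hSsub (Finset.mem_sdiff.mp hi).1)).le
  have hP0 : (0:ℝ) ≤ ∑ i ∈ Sstar \ M, v i :=
    Finset.sum_nonneg fun i hi => (hv i (hstarsub (Finset.mem_sdiff.mp hi).1)).le
  by_cases hneg : 1 - 2*θ - L ≤ 0
  · have : (1 - 2*θ - L) * ∑ i ∈ Sstar \ M, v i ≤ 0 :=
      mul_nonpos_of_nonpos_of_nonneg hneg hP0
    linarith
  push_neg at hneg
  have hk1 : (1:ℝ) ≤ (k:ℝ) := by exact_mod_cast hk
  have hL0 : 0 ≤ L := div_nonneg (Real.log_nonneg hk1) (Real.sqrt_nonneg _)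
  have h1θ : 0 < 1 - θ := by linarith
  have hL1 : L < 1 := by linarith
  have hsqpos : 0 < Real.sqrt k := Real.sqrt_pos.mpr (by linarith)
  have hmkL : (M.card:ℝ) ≤ (k:ℝ) * L := by
    have hs : Real.sqrt k * L = Real.log k := by
      rw [hLdef]; field_simp
    calc (M.card:ℝ) ≤ Real.sqrt k * Real.log k := hMcard
      _ = Real.sqrt k * (Real.sqrt k * L) := by rw [hs]
      _ = (k:ℝ) * L := by rw [← mul_assoc, Real.mul_self_sqrt (by positivity)]
  have hkm : (M.card:ℝ) < (k:ℝ) := lt_of_le_of_lt hmkL (by nlinarith)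
  set A := (Sstar \ M) ∩ Shat with hAdef
  set B := (Sstar \ M) \ Shat with hBdef
  set C := (Shat \ M) \ Sstar with hCdef
  set w := vhat imin with hwdef
  have hw0 : 0 ≤ w := hvhat imin (hSsub himin)
  -- split S* \ M
  have hsplit : ∑ i ∈ A, v i + ∑ i ∈ B, v i = ∑ i ∈ Sstar \ M, v i :=
    Finset.sum_inter_add_sum_sdiff _ _ _
  -- A ∪ C ⊆ Shat \ M, disjoint
  have hAC : ∑ i ∈ A, v i + ∑ i ∈ C, v i ≤ ∑ i ∈ Shat \ M, v i := by
    have hdisj : Disjoint A C := by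
      rw [Finset.disjoint_left]
      intro i hiA hiC
      exact (Finset.mem_sdiff.mp hiC).2 (Finset.mem_sdiff.mp (Finset.mem_inter.mp hiA).1).1
    have hsub : A ∪ C ⊆ Shat \ M := by
      intro i hi
      rcases Finset.mem_union.mp hi with h | h
      · rcases Finset.mem_inter.mp h with ⟨h1, h2⟩
        exact Finset.mem_sdiff.mpr ⟨h2, (Finset.mem_sdiff.mp h1).2⟩
      · exact (Finset.mem_sdiff.mp h).1
    calc ∑ i ∈ A, v i + ∑ i ∈ C, v i = ∑ i ∈ A ∪ C, v i := (Finset.sum_union hdisj).symm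
      _ ≤ ∑ i ∈ Shat \ M, v i := Finset.sum_le_sum_of_subset_of_nonneg hsub
          (fun i hi _ => (hv i (hSsub (Finset.mem_sdiff.mp hi).1)).le)
  -- F1
  have hF1 : (1 - θ) * ∑ i ∈ B, v i ≤ (B.card : ℝ) * w := by
    rw [Finset.mul_sum]
    calc ∑ i ∈ B, (1-θ) * v i ≤ ∑ i ∈ B, w := by
          refine Finset.sum_le_sum fun i hi => ?_
          have hi' := Finset.mem_sdiff.mp hi
          have hi'' := Finset.mem_sdiff.mp hi'.1
          exact herrout i (Finset.mem_sdiff.mpr ⟨Finset.mem_sdiff.mpr ⟨hstarsub hi''.1, hi'.2⟩, hi''.2⟩)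
      _ = (B.card : ℝ) * w := by rw [Finset.sum_const, nsmul_eq_mul]
  -- F2
  have hF2 : (C.card : ℝ) * w ≤ (1 + θ) * ∑ i ∈ C, v i := by
    rw [Finset.mul_sum]
    calc (C.card : ℝ) * w = ∑ i ∈ C, w := by rw [Finset.sum_const, nsmul_eq_mul]
      _ ≤ ∑ i ∈ C, (1+θ) * v i := by
          refine Finset.sum_le_sum fun i hi => ?_
          have hi' := (Finset.mem_sdiff.mp hi).1
          exact le_trans (hminval i (Finset.mem_sdiff.mp hi').1) (herrS i hi').2
  -- card of Shat \ M
  have hcardSM : (k:ℝ) - M.card ≤ ((Shat \ M).card : ℝ) := by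
    have h1 : Shat ⊆ (Shat \ M) ∪ M := by
      intro i hi
      by_cases hiM : i ∈ M
      · exact Finset.mem_union_right _ hiM
      · exact Finset.mem_union_left _ (Finset.mem_sdiff.mpr ⟨hi, hiM⟩)
    have h2 : Shat.card ≤ (Shat \ M).card + M.card :=
      le_trans (Finset.card_le_card h1) (Finset.card_union_le _ _)
    have h3 : k ≤ (Shat \ M).card + M.card := hScard ▸ h2
    have h4 : (k:ℝ) ≤ ((Shat \ M).card : ℝ) + (M.card : ℝ) := by exact_mod_cast h3
    linarith
  -- F3
  have hF3 : ((k:ℝ) - M.card) * w ≤ (1 + θ) * ∑ i ∈ Shat \ M, v i := by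
    calc ((k:ℝ) - M.card) * w ≤ ((Shat \ M).card : ℝ) * w :=
          mul_le_mul_of_nonneg_right hcardSM hw0
      _ = ∑ i ∈ Shat \ M, w := by rw [Finset.sum_const, nsmul_eq_mul]
      _ ≤ ∑ i ∈ Shat \ M, (1+θ) * v i := by
          refine Finset.sum_le_sum fun i hi => ?_
          exact le_trans (hminval i (Finset.mem_sdiff.mp hi).1) (herrS i hi).2
      _ = (1 + θ) * ∑ i ∈ Shat \ M, v i := (Finset.mul_sum _ _ _).symm
  -- F5: card inequality
  have hF5 : (B.card : ℝ) ≤ (C.card : ℝ) + M.card := by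
    have e1 : B.card + ((Sstar \ M) ∩ Shat).card = (Sstar \ M).card :=
      Finset.card_sdiff_add_card_inter _ _
    have e2 : C.card + ((Shat \ M) ∩ Sstar).card = (Shat \ M).card :=
      Finset.card_sdiff_add_card_inter _ _
    have einter : (Sstar \ M) ∩ Shat = (Shat \ M) ∩ Sstar := by
      ext i
      simp only [Finset.mem_inter, Finset.mem_sdiff]
      tauto
    have h1 : (Sstar \ M).card ≤ k :=
      le_trans (Finset.card_le_card (Finset.sdiff_subset)) hstarcard
    rw [einter] at e1
    have e1' : (B.card : ℝ) + (((Shat \ M) ∩ Sstar).card : ℝ) = ((Sstar \ M).card : ℝ) := by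
      exact_mod_cast congrArg Nat.cast e1
    have e2' : (C.card : ℝ) + (((Shat \ M) ∩ Sstar).card : ℝ) = (((Shat \ M)).card : ℝ) := by
      exact_mod_cast congrArg Nat.cast e2
    have h1' : ((Sstar \ M).card : ℝ) ≤ (k:ℝ) := by exact_mod_cast h1
    linarith
  -- main combination
  set SA := ∑ i ∈ A, v i
  set SB := ∑ i ∈ B, v i
  set SC := ∑ i ∈ C, v i
  set T := ∑ i ∈ Shat \ M, v i
  set P := ∑ i ∈ Sstar \ M, v i
  have hSA0 : 0 ≤ SA := Finset.sum_nonneg fun i hi =>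
    (hv i (hSsub (Finset.mem_inter.mp hi).2)).le
  have hSB0 : 0 ≤ SB := Finset.sum_nonneg fun i hi =>
    (hv i (hstarsub (Finset.mem_sdiff.mp (Finset.mem_sdiff.mp hi).1).1)).le
  have hSC0 : 0 ≤ SC := Finset.sum_nonneg fun i hi =>
    (hv i (hSsub (Finset.mem_sdiff.mp (Finset.mem_sdiff.mp hi).1).1)).le
  have hkmpos : 0 < (k:ℝ) - M.card := by linarith
  have hm0 : (0:ℝ) ≤ (M.card : ℝ) := Nat.cast_nonneg _
  have hA : (1 - θ) * (((k:ℝ) - M.card) * P) ≤ (1 + θ) * ((k:ℝ) * T) := by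
    rw [← hsplit]
    have s1 : ((k:ℝ) - M.card) * ((1-θ)*SB) ≤ ((k:ℝ) - M.card) * ((B.card:ℝ)*w) :=
      mul_le_mul_of_nonneg_left hF1 hkmpos.le
    have s2 : ((k:ℝ) - M.card) * ((B.card:ℝ)*w) ≤
        ((k:ℝ) - M.card) * ((((C.card:ℝ)) + (M.card:ℝ))*w) :=
      mul_le_mul_of_nonneg_left (mul_le_mul_of_nonneg_right hF5 hw0) hkmpos.le
    have s3 : ((k:ℝ) - M.card) * ((C.card:ℝ)*w) ≤ ((k:ℝ) - M.card) * ((1+θ)*SC) :=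
      mul_le_mul_of_nonneg_left hF2 hkmpos.le
    have s4 : (M.card:ℝ) * ((((k:ℝ) - M.card))*w) ≤ (M.card:ℝ) * ((1+θ)*T) :=
      mul_le_mul_of_nonneg_left hF3 hm0
    have s5 : ((1+θ)*((k:ℝ) - M.card))*(SA+SC) ≤ ((1+θ)*((k:ℝ) - M.card))*T :=
      mul_le_mul_of_nonneg_left hAC (mul_nonneg (by linarith) hkmpos.le)
    have s6 : 0 ≤ θ*(((k:ℝ) - M.card)*SA) := mul_nonneg hθ0 (mul_nonneg hkmpos.le hSA0)
    linarith [s1, s2, s3, s4, s5, s6]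
  have hc : (1 - 2*θ - L) * (1 + θ) ≤ (1 - θ) * (1 - L) := by nlinarith [mul_nonneg hθ0 hL0, sq_nonneg θ]
  have hX : 0 < (1 - θ) * ((k:ℝ) - M.card) := mul_pos h1θ hkmpos
  have key : ((1 - θ) * ((k:ℝ) - M.card)) * ((1 - 2*θ - L) * P) ≤
      ((1 - θ) * ((k:ℝ) - M.card)) * T := by
    have t1 : (1 - 2*θ - L) * ((1 - θ) * (((k:ℝ) - M.card) * P)) ≤
        (1 - 2*θ - L) * ((1 + θ) * ((k:ℝ) * T)) :=
      mul_le_mul_of_nonneg_left hA hneg.le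
    have t2 : ((1 - 2*θ - L) * (1 + θ)) * ((k:ℝ)*T) ≤ ((1 - θ) * (1 - L)) * ((k:ℝ)*T) :=
      mul_le_mul_of_nonneg_right hc (mul_nonneg (by linarith) hT0)
    have t3 : ((1-θ)*T) * (M.card:ℝ) ≤ ((1-θ)*T) * ((k:ℝ)*L) :=
      mul_le_mul_of_nonneg_left hmkL (mul_nonneg h1θ.le hT0)
    linarith [t1, t2, t3]
  have := le_of_mul_le_mul_left key hX
  linarith
end

section
/- For every real τ ∈ (0,1] and every integer m ≥ 2, ∫_τ^1 (1−t)(1 − (1−t)^{m−1}) (τ/t) dt + (1−τ) · ∫_0^τ (m−1)(1−s)^{m−2} (τ−s) ds = − τ · Σ_{k=1}^{m} C(m,k) (−1)^{k} (1 − τ^k)/k − ((1−τ)/m)(1 − (1−τ)^{m}), where C(m,k) denotes the binomial coefficient. -/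
lemma sum_neg_pow (m : ℕ) (t : ℝ) :
    ∑ k ∈ Finset.Icc 1 m, (m.choose k : ℝ) * (-1 : ℝ) ^ k * t ^ k = (1 - t) ^ m - 1 := by
  have h : (1 - t : ℝ) ^ m = ∑ k ∈ Finset.range (m + 1), (-t) ^ k * (m.choose k : ℝ) := by
    rw [show (1 - t : ℝ) = -t + 1 by ring, add_pow]
    simp
  rw [h, Finset.sum_range_succ', ← Finset.Ico_add_one_right_eq_Icc, Finset.sum_Ico_eq_sum_range]
  simp only [Nat.add_sub_cancel, pow_zero, Nat.choose_zero_right, Nat.cast_one, one_mul]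
  rw [add_sub_cancel_right]
  exact Finset.sum_congr rfl fun i _ => by rw [neg_pow]; ring

lemma int_one_sub_pow (a b : ℝ) (p : ℕ) :
    ∫ s in a..b, (1 - s) ^ p = ((1 - a) ^ (p + 1) - (1 - b) ^ (p + 1)) / (p + 1) := by
  have h := intervalIntegral.integral_comp_sub_left (a := a) (b := b) (fun x : ℝ => x ^ p) 1
  rw [h, integral_pow]

/-- For `τ ∈ (0,1]` and `m ≥ 2`,
`∫_τ^1 (1-t)(1-(1-t)^{m-1})(τ/t) dt + (1-τ) ∫_0^τ (m-1)(1-s)^{m-2}(τ-s) ds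
  = -τ Σ_{k=1}^m C(m,k) (-1)^k (1-τ^k)/k - ((1-τ)/m)(1-(1-τ)^m)`. -/
theorem integral_secretary_identity_case_v (τ : ℝ) (hτ0 : 0 < τ) (hτ1 : τ ≤ 1)
    (m : ℕ) (hm : 2 ≤ m) :
    (∫ t in τ..1, (1 - t) * (1 - (1 - t) ^ (m - 1)) * (τ / t)) +
      (1 - τ) * ∫ s in (0 : ℝ)..τ, ((m : ℝ) - 1) * (1 - s) ^ (m - 2) * (τ - s) =
    -(τ * ∑ k ∈ Finset.Icc 1 m, (m.choose k : ℝ) * (-1 : ℝ) ^ k * (1 - τ ^ k) / (k : ℝ)) -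
      ((1 - τ) / (m : ℝ)) * (1 - (1 - τ) ^ m) := by
  obtain ⟨n, rfl⟩ : ∃ n, m = n + 2 := ⟨m - 2, by omega⟩
  simp only [show n + 2 - 1 = n + 1 from rfl, show n + 2 - 2 = n from rfl]
  have hn2 : ((n : ℝ) + 2) ≠ 0 := by positivity
  -- second integral
  have hfun : (fun s : ℝ => (((n + 2 : ℕ) : ℝ) - 1) * (1 - s) ^ n * (τ - s)) =
      fun s : ℝ => ((n : ℝ) + 1) * (1 - s) ^ (n + 1) - (((n : ℝ) + 1) * (1 - τ)) * (1 - s) ^ n := by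
    funext s; push_cast; ring
  have h2 : (∫ s in (0:ℝ)..τ, (((n + 2 : ℕ) : ℝ) - 1) * (1 - s) ^ n * (τ - s)) =
      ((n : ℝ) + 1) * ((1 - (1 - τ) ^ (n + 2)) / ((n : ℝ) + 2)) -
        (((n : ℝ) + 1) * (1 - τ)) * ((1 - (1 - τ) ^ (n + 1)) / ((n : ℝ) + 1)) := by
    have i1 : IntervalIntegrable (fun s : ℝ => ((n : ℝ) + 1) * (1 - s) ^ (n + 1))
        MeasureTheory.volume 0 τ := (Continuous.intervalIntegrable (by fun_prop)) _ _
    have i2 : IntervalIntegrable (fun s : ℝ => (((n : ℝ) + 1) * (1 - τ)) * (1 - s) ^ n)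
        MeasureTheory.volume 0 τ := (Continuous.intervalIntegrable (by fun_prop)) _ _
    rw [hfun, intervalIntegral.integral_sub i1 i2,
      intervalIntegral.integral_const_mul, intervalIntegral.integral_const_mul,
      int_one_sub_pow, int_one_sub_pow]
    push_cast
    norm_num
    left
    norm_num [show n + 1 + 1 = n + 2 from rfl]
    ring_nf
  -- first integral
  have hEq : Set.EqOn (fun t : ℝ => (1 - t) * (1 - (1 - t) ^ (n + 1)) * (τ / t))
      (fun t : ℝ => -τ - ∑ k ∈ Finset.Icc 1 (n + 2),
        τ * ((n + 2).choose k : ℝ) * (-1 : ℝ) ^ k * t ^ (k - 1)) (Set.uIcc τ 1) := by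
    intro t ht
    rw [Set.uIcc_of_le hτ1] at ht
    have ht0 : t ≠ 0 := by have := ht.1; intro h; rw [h] at this; linarith
    have hsum : ∑ k ∈ Finset.Icc 1 (n + 2), τ * ((n + 2).choose k : ℝ) * (-1 : ℝ) ^ k * t ^ (k - 1)
        = (τ / t) * ∑ k ∈ Finset.Icc 1 (n + 2), ((n + 2).choose k : ℝ) * (-1 : ℝ) ^ k * t ^ k := by
      rw [Finset.mul_sum]
      refine Finset.sum_congr rfl fun k hk => ?_
      obtain ⟨j, rfl⟩ : ∃ j, k = j + 1 :=
        ⟨k - 1, by have := (Finset.mem_Icc.mp hk).1; omega⟩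
      simp only [Nat.add_sub_cancel, pow_succ]
      field_simp
    simp only
    rw [hsum, sum_neg_pow]
    field_simp
    ring
  have hcont : Continuous (fun t : ℝ => ∑ k ∈ Finset.Icc 1 (n + 2),
      τ * ((n + 2).choose k : ℝ) * (-1 : ℝ) ^ k * t ^ (k - 1)) :=
    continuous_finset_sum _ fun k _ => continuous_const.mul (continuous_pow _)
  have hterm : ∀ k ∈ Finset.Icc 1 (n + 2),
      (∫ t in τ..1, τ * ((n + 2).choose k : ℝ) * (-1 : ℝ) ^ k * t ^ (k - 1)) =
      τ * (((n + 2).choose k : ℝ) * (-1 : ℝ) ^ k * (1 - τ ^ k) / (k : ℝ)) := by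
    intro k hk
    obtain ⟨j, rfl⟩ : ∃ j, k = j + 1 :=
      ⟨k - 1, by have := (Finset.mem_Icc.mp hk).1; omega⟩
    rw [intervalIntegral.integral_const_mul, integral_pow]
    simp only [Nat.add_sub_cancel, one_pow]
    push_cast
    ring
  have h1 : (∫ t in τ..1, (1 - t) * (1 - (1 - t) ^ (n + 1)) * (τ / t)) =
      -τ * (1 - τ) - τ * ∑ k ∈ Finset.Icc 1 (n + 2),
        ((n + 2).choose k : ℝ) * (-1 : ℝ) ^ k * (1 - τ ^ k) / (k : ℝ) := by
    rw [intervalIntegral.integral_congr hEq,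
      intervalIntegral.integral_sub (intervalIntegrable_const) (hcont.intervalIntegrable _ _),
      intervalIntegral.integral_finset_sum (f := fun k t => τ * ((n + 2).choose k : ℝ) * (-1 : ℝ) ^ k * t ^ (k - 1))
        (fun k _ => (continuous_const.mul (continuous_pow _)).intervalIntegrable _ _),
      Finset.sum_congr rfl hterm, ← Finset.mul_sum]
    simp [smul_eq_mul]
    ring
  rw [h1, h2]
  field_simp
  push_cast
  ring
end

section
/- For every real τ ∈ (0,1), the function g(m) = τ ln(1/τ) − τ ∫_τ^1 ((1−t)^m / t) dt − (1−τ)/m is non-decreasing on the positive integers, i.e., g(m+1) ≥ g(m) for every positive integer m. -/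
/-- For `τ ∈ (0,1)`, the function
`g(m) = τ ln(1/τ) - τ ∫_τ^1 (1-t)^m / t dt - (1-τ)/m` is non-decreasing in the positive
integer `m`. -/
theorem case_v_lower_bound_monotone (τ : ℝ) (hτ0 : 0 < τ) (hτ1 : τ < 1)
    (m : ℕ) (hm : 0 < m) :
    τ * Real.log (1 / τ) - τ * (∫ t in τ..1, (1 - t) ^ m / t) - (1 - τ) / (m : ℝ) ≤
      τ * Real.log (1 / τ) - τ * (∫ t in τ..1, (1 - t) ^ (m + 1) / t) -
        (1 - τ) / ((m : ℝ) + 1) := by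
  have hmm : (0:ℝ) < m := by exact_mod_cast hm
  have hint : ∀ k : ℕ, IntervalIntegrable (fun t => (1 - t) ^ k / t)
      MeasureTheory.volume τ 1 := by
    intro k
    apply ContinuousOn.intervalIntegrable
    apply ContinuousOn.div
    · exact (Continuous.pow (by continuity) k).continuousOn
    · exact continuousOn_id
    · intro t ht
      rw [Set.uIcc_of_le hτ1.le] at ht
      exact ne_of_gt (lt_of_lt_of_le hτ0 ht.1)
  have hI : (∫ t in τ..1, (1 - t) ^ (m + 1) / t) ≤ ∫ t in τ..1, (1 - t) ^ m / t := by
    apply intervalIntegral.integral_mono_on hτ1.le (hint _) (hint _)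
    intro t ht
    have ht0 : 0 < t := lt_of_lt_of_le hτ0 ht.1
    have h1t : 0 ≤ 1 - t := by linarith [ht.2]
    have hpow : (1 - t) ^ (m + 1) ≤ (1 - t) ^ m :=
      pow_le_pow_of_le_one h1t (by linarith [ht.2]) (Nat.le_succ m)
    gcongr
  have h2 : (1 - τ) / ((m : ℝ) + 1) ≤ (1 - τ) / (m : ℝ) := by
    apply div_le_div_of_nonneg_left (by linarith) hmm (by linarith)
  have h3 : τ * (∫ t in τ..1, (1 - t) ^ (m + 1) / t) ≤
      τ * (∫ t in τ..1, (1 - t) ^ m / t) :=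
    mul_le_mul_of_nonneg_left hI hτ0.le
  linarith
end
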